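/- arXiv:1107.1289 — 12 statements merged into one kernel-verified Lean document; each statement's English description precedes it below -/
import Mathlib

section
/- Let f : ℝ≥0 → ℝ≥0 be a nondecreasing convex function, let X be a normed linear space, let p_1 > 0, p_j ≤ 0 for j = 2, ..., n, and suppose S := p_1 + ... + p_n > 0. Then for all x_1, ..., x_n ∈ X, f(‖∑_{j=1}^n p_j x_j‖ / S) ≥ (∑_{j=1}^n p_j f(‖x_j‖)) / S. -/
theorem rassias_pecaric {X : Type*} [NormedAddCommGroup X] [NormedSpace ℝ X]
    (f : ℝ → ℝ) (hconv : ConvexOn ℝ (Set.Ici 0) f)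
    (hmono : MonotoneOn f (Set.Ici 0)) (hnonneg : ∀ x ∈ Set.Ici (0 : ℝ), 0 ≤ f x)
    (n : ℕ) (hn : 0 < n) (p : Fin n → ℝ) (hp1 : 0 < p ⟨0, hn⟩)
    (hpj : ∀ j : Fin n, j ≠ ⟨0, hn⟩ → p j ≤ 0)
    (hS : 0 < ∑ j, p j) (x : Fin n → X) :
    (∑ j, p j * f ‖x j‖) / (∑ j, p j) ≤ f (‖∑ j, p j • x j‖ / (∑ j, p j)) := by
  set i0 : Fin n := ⟨0, hn⟩ with hi0
  set S : ℝ := ∑ j, p j with hSdef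
  have hSne : S ≠ 0 := hS.ne'
  set y : X := S⁻¹ • ∑ j, p j • x j with hy
  have hyn : ‖∑ j, p j • x j‖ / S = ‖y‖ := by
    rw [hy, norm_smul, norm_inv, Real.norm_of_nonneg hS.le]
    ring
  rw [hyn]
  set w : Fin n → ℝ := fun j => if j = i0 then S else -p j with hw
  set v : Fin n → X := fun j => if j = i0 then y else x j with hv
  have hwnn : ∀ j, 0 ≤ w j := by
    intro j
    by_cases h : j = i0
    · simp [hw, h, hS.le]
    · simp only [hw, if_neg h]
      linarith [hpj j h]
  have hwsum : ∑ j, w j = p i0 := by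
    have h1 : w i0 + ∑ j ∈ Finset.univ.erase i0, w j = ∑ j, w j :=
      Finset.add_sum_erase _ w (Finset.mem_univ i0)
    have h2 : ∑ j ∈ Finset.univ.erase i0, w j
        = ∑ j ∈ Finset.univ.erase i0, (-p j) :=
      Finset.sum_congr rfl fun j hj => by
        simp [hw, Finset.ne_of_mem_erase hj]
    have h3 : p i0 + ∑ j ∈ Finset.univ.erase i0, p j = S :=
      Finset.add_sum_erase _ p (Finset.mem_univ i0)
    have h4 : w i0 = S := by simp [hw]
    rw [← h1, h2, h4, Finset.sum_neg_distrib]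
    linarith
  have hvec : ∑ j, w j • v j = p i0 • x i0 := by
    have h1 : w i0 • v i0 + ∑ j ∈ Finset.univ.erase i0, w j • v j
        = ∑ j, w j • v j :=
      Finset.add_sum_erase _ (fun j => w j • v j) (Finset.mem_univ i0)
    have h2 : ∑ j ∈ Finset.univ.erase i0, w j • v j
        = ∑ j ∈ Finset.univ.erase i0, (-p j) • x j :=
      Finset.sum_congr rfl fun j hj => by
        simp [hw, hv, Finset.ne_of_mem_erase hj]
    have h3 : w i0 • v i0 = ∑ j, p j • x j := by
      simp only [hw, hv, if_pos rfl, hy]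
      rw [smul_smul, mul_inv_cancel₀ hSne, one_smul]
    have h4 : p i0 • x i0 + ∑ j ∈ Finset.univ.erase i0, p j • x j
        = ∑ j, p j • x j :=
      Finset.add_sum_erase _ (fun j => p j • x j) (Finset.mem_univ i0)
    rw [← h1, h2, h3, ← h4]
    simp [neg_smul, Finset.sum_neg_distrib]
  have hnorm : p i0 * ‖x i0‖ ≤ ∑ j, w j * ‖v j‖ := by
    calc p i0 * ‖x i0‖ = ‖p i0 • x i0‖ := by
          rw [norm_smul, Real.norm_of_nonneg hp1.le]
      _ = ‖∑ j, w j • v j‖ := by rw [hvec]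
      _ ≤ ∑ j, ‖w j • v j‖ := norm_sum_le _ _
      _ = ∑ j, w j * ‖v j‖ := Finset.sum_congr rfl fun j _ => by
          rw [norm_smul, Real.norm_of_nonneg (hwnn j)]
  have hjensen := hconv.map_centerMass_le (t := Finset.univ)
      (w := w) (p := fun j => ‖v j‖) (fun j _ => hwnn j)
      (by rw [hwsum]; exact hp1) (fun j _ => Set.mem_Ici.mpr (norm_nonneg _))
  have hcm : Finset.univ.centerMass w (fun j => ‖v j‖)
      = (p i0)⁻¹ * ∑ j, w j * ‖v j‖ := by
    simp [Finset.centerMass, hwsum, smul_eq_mul]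
  have hcm2 : Finset.univ.centerMass w (f ∘ fun j => ‖v j‖)
      = (p i0)⁻¹ * ∑ j, w j * f ‖v j‖ := by
    simp [Finset.centerMass, hwsum, smul_eq_mul, Function.comp]
  rw [hcm, hcm2] at hjensen
  have hsum_nn : 0 ≤ (p i0)⁻¹ * ∑ j, w j * ‖v j‖ :=
    mul_nonneg (inv_nonneg.mpr hp1.le)
      (Finset.sum_nonneg fun j _ => mul_nonneg (hwnn j) (norm_nonneg _))
  have hmle : ‖x i0‖ ≤ (p i0)⁻¹ * ∑ j, w j * ‖v j‖ := by
    rw [← div_eq_inv_mul, le_div_iff₀ hp1]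
    linarith
  have hkey : f ‖x i0‖ ≤ (p i0)⁻¹ * ∑ j, w j * f ‖v j‖ :=
    le_trans (hmono (Set.mem_Ici.mpr (norm_nonneg _)) (Set.mem_Ici.mpr hsum_nn) hmle) hjensen
  have hmul : p i0 * f ‖x i0‖ ≤ ∑ j, w j * f ‖v j‖ := by
    have := mul_le_mul_of_nonneg_left hkey hp1.le
    rwa [← mul_assoc, mul_inv_cancel₀ hp1.ne', one_mul] at this
  have hsplit : ∑ j, (w j * f ‖v j‖ + p j * f ‖x j‖) = S * f ‖y‖ + p i0 * f ‖x i0‖ := by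
    rw [Fintype.sum_eq_single i0 (fun j hj => by simp [hw, hv, hj])]
    simp [hw, hv]
  have hadd : ∑ j, (w j * f ‖v j‖ + p j * f ‖x j‖)
      = (∑ j, w j * f ‖v j‖) + ∑ j, p j * f ‖x j‖ := Finset.sum_add_distrib
  rw [div_le_iff₀ hS]
  linarith
end

section
/- Let A, B be bounded linear operators on a complex Hilbert space and let p, q > 1 with 1/p + 1/q = 1 and q ≥ p. Then |A - B|^2 + |(p-1)A + B|^2 ≤ p|A|^2 + q|B|^2 in the operator order. -/
open ContinuousLinearMap in
lemma hirzallah_aux_smul {H : Type*} [NormedAddCommGroup H] [InnerProductSpace ℂ H]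
    [CompleteSpace H] {T : H →L[ℂ] H} (hT : T.IsPositive) {c : ℝ} (hc : 0 ≤ c) :
    ((c : ℂ) • T).IsPositive := by
  exact hT.smul_of_nonneg (Complex.zero_le_real.mpr hc)

open ContinuousLinearMap in
theorem hirzallah {H : Type*} [NormedAddCommGroup H] [InnerProductSpace ℂ H]
    [CompleteSpace H] (A B : H →L[ℂ] H) (p q : ℝ) (hp : 1 < p) (hq : 1 < q)
    (hpq : 1 / p + 1 / q = 1) (hqp : p ≤ q) :
    (p • (adjoint A * A) + q • (adjoint B * B)
      - adjoint (A - B) * (A - B)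
      - adjoint ((p - 1) • A + B) * ((p - 1) • A + B)).IsPositive := by
  have hp0 : (0:ℝ) < p := lt_trans one_pos hp
  have hq0 : (0:ℝ) < q := lt_trans one_pos hq
  have hs : p - 1 ≠ 0 := sub_ne_zero.mpr (ne_of_gt hp)
  have hqp' : q * (p - 1) = p := by field_simp at hpq; nlinarith
  have hp2 : p ≤ 2 := by nlinarith
  set C : H →L[ℂ] H := A + (((p-1)⁻¹ : ℝ) : ℂ) • B with hC
  have key : p • (adjoint A * A) + q • (adjoint B * B)
      - adjoint (A - B) * (A - B)
      - adjoint ((p - 1) • A + B) * ((p - 1) • A + B)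
      = (((2 - p) * (p - 1) : ℝ) : ℂ) • (adjoint C * C) := by
    rw [← star_eq_adjoint, ← star_eq_adjoint, ← star_eq_adjoint, ← star_eq_adjoint,
      ← star_eq_adjoint, hC]
    rw [show (p : ℝ) • (star A * A) = (p : ℂ) • (star A * A) from (Complex.coe_smul _ _).symm,
      show (q : ℝ) • (star B * B) = (q : ℂ) • (star B * B) from (Complex.coe_smul _ _).symm,
      show ((p - 1 : ℝ)) • A = ((p - 1 : ℝ) : ℂ) • A from (Complex.coe_smul _ _).symm]
    simp only [star_sub, star_add, star_smul, Complex.star_def, Complex.conj_ofReal,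
      mul_sub, sub_mul, mul_add, add_mul, smul_mul_assoc, mul_smul_comm, smul_smul,
      smul_sub, smul_add]
    have hqc : (q:ℂ) * ((p:ℂ) - 1) = (p:ℂ) := by exact_mod_cast hqp'
    have hsc : ((p:ℂ) - 1) ≠ 0 := by
      simpa using (Complex.ofReal_ne_zero.mpr hs)
    match_scalars <;> field_simp <;>
      first
        | linear_combination (0:ℂ) * hqc
        | linear_combination ((p:ℂ) - 1) * hqc
        | linear_combination hqc
  rw [key]
  have hCpos : (star C * C).IsPositive := by
    have := (isPositive_one (E := H) (𝕜 := ℂ)).adjoint_conj C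
    simpa [← star_eq_adjoint, ← mul_def] using this
  rw [star_eq_adjoint] at hCpos
  exact hirzallah_aux_smul hCpos (by nlinarith)
end

section
/- For all bounded linear operators A, B on a complex Hilbert space and conjugate exponents p, q > 0 with 1/p + 1/q = 1, the identity |A - B|^2 + |√(p/q) A + √(q/p) B|^2 = p|A|^2 + q|B|^2 holds. -/
set_option synthInstance.maxHeartbeats 1000000 in
open ContinuousLinearMap in
lemma adjoint_real_smul {H : Type*} [NormedAddCommGroup H] [InnerProductSpace ℂ H]
    [CompleteSpace H] (r : ℝ) (A : H →L[ℂ] H) :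
    adjoint (r • A) = r • adjoint A := by
  simp [← Complex.coe_smul, map_smulₛₗ, Complex.conj_ofReal]

open ContinuousLinearMap in
set_option synthInstance.maxHeartbeats 1000000 in
set_option maxHeartbeats 1000000 in
theorem zhang_identity {H : Type*} [NormedAddCommGroup H] [InnerProductSpace ℂ H]
    [CompleteSpace H] (A B : H →L[ℂ] H) (p q : ℝ) (hp : 0 < p) (hq : 0 < q)
    (hpq : 1 / p + 1 / q = 1) :
    adjoint (A - B) * (A - B)
      + adjoint (Real.sqrt (p / q) • A + Real.sqrt (q / p) • B)
          * (Real.sqrt (p / q) • A + Real.sqrt (q / p) • B)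
    = p • (adjoint A * A) + q • (adjoint B * B) := by
  have ha : Real.sqrt (p / q) * Real.sqrt (p / q) = p / q :=
    Real.mul_self_sqrt (by positivity)
  have hb : Real.sqrt (q / p) * Real.sqrt (q / p) = q / p :=
    Real.mul_self_sqrt (by positivity)
  have hab : Real.sqrt (p / q) * Real.sqrt (q / p) = 1 := by
    rw [← Real.sqrt_mul (by positivity)]
    rw [show p / q * (q / p) = 1 by field_simp]
    exact Real.sqrt_one
  have h1 : 1 + p / q = p := by field_simp at hpq ⊢; linarith
  have h2 : 1 + q / p = q := by field_simp at hpq ⊢; linarith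
  simp only [map_sub, map_add, adjoint_real_smul]
  simp only [sub_mul, mul_sub, add_mul, mul_add, smul_add, smul_mul_assoc, mul_smul_comm,
    smul_smul, ha, hb, hab, one_smul]
  match_scalars <;> field_simp at hpq ⊢ <;> nlinarith [hp, hq, mul_pos hp hq]
end

section
/- Let a = (a_1,...,a_n), b = (b_1,...,b_n), c = (c_1,...,c_n) be real vectors such that the n×n matrix D(c) - Λ(a) - Λ(b) is positive semidefinite, where Λ(x) is the rank-one matrix (x_i x_j) and D(c) = diag(c_1,...,c_n). Then for all bounded linear operators A_1,...,A_n on a Hilbert space, |∑_{i=1}^n a_i A_i|^2 + |∑_{i=1}^n b_i A_i|^2 ≤ ∑_{i=1}^n c_i |A_i|^2. -/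
open Matrix in
private lemma aux_psd_gram {E : Type*} [NormedAddCommGroup E] [InnerProductSpace ℝ E]
    {n : ℕ} {M : Matrix (Fin n) (Fin n) ℝ} (hM : M.PosSemidef) (u : Fin n → E) :
    0 ≤ ∑ i, ∑ j, M i j * (inner ℝ (u i) (u j) : ℝ) := by
  obtain ⟨m, B, rfl⟩ : ∃ m, ∃ B : Matrix (Fin m) (Fin n) ℝ, M = Bᴴ * B := by
    obtain ⟨m, v, hv⟩ := Matrix.posSemidef_iff_eq_sum_vecMulVec.mp hM
    refine ⟨m, Matrix.of fun k i => v k i, ?_⟩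
    ext i j
    simp [hv, Matrix.mul_apply, Matrix.vecMulVec_apply, Matrix.sum_apply]
  have h1 : ∀ k, (inner ℝ (∑ i, B k i • u i) (∑ j, B k j • u j) : ℝ)
      = ∑ i, ∑ j, B k i * B k j * (inner ℝ (u i) (u j) : ℝ) := by
    intro k
    simp only [sum_inner, inner_sum, real_inner_smul_left, real_inner_smul_right]
    refine Finset.sum_congr rfl fun i _ => Finset.sum_congr rfl fun j _ => ?_
    rw [real_inner_comm (u j) (u i)]
    ring
  have h2 : ∑ i, ∑ j, (Bᴴ * B) i j * (inner ℝ (u i) (u j) : ℝ)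
      = ∑ k, ∑ i, ∑ j, B k i * B k j * (inner ℝ (u i) (u j) : ℝ) := by
    have : ∀ i j, (Bᴴ * B) i j * (inner ℝ (u i) (u j) : ℝ)
        = ∑ k, B k i * B k j * (inner ℝ (u i) (u j) : ℝ) := by
      intro i j
      rw [Matrix.mul_apply, Finset.sum_mul]
      exact Finset.sum_congr rfl fun k _ => by
        rw [Matrix.conjTranspose_apply, star_trivial]
    simp only [this]
    calc ∑ i, ∑ j, ∑ k, B k i * B k j * (inner ℝ (u i) (u j) : ℝ)
        = ∑ i, ∑ k, ∑ j, B k i * B k j * (inner ℝ (u i) (u j) : ℝ) :=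
          Finset.sum_congr rfl fun i _ => Finset.sum_comm
      _ = ∑ k, ∑ i, ∑ j, B k i * B k j * (inner ℝ (u i) (u j) : ℝ) := Finset.sum_comm
  rw [h2, ← Finset.sum_congr rfl fun k _ => h1 k]
  exact Finset.sum_nonneg fun k _ => real_inner_self_nonneg

open ContinuousLinearMap in
theorem matrix_order_bohr {H : Type*} [NormedAddCommGroup H] [InnerProductSpace ℂ H]
    [CompleteSpace H] (n : ℕ) (a b c : Fin n → ℝ)
    (h : (Matrix.diagonal c - Matrix.vecMulVec a a - Matrix.vecMulVec b b).PosSemidef)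
    (A : Fin n → (H →L[ℂ] H)) :
    ((∑ i, c i • (adjoint (A i) * A i))
      - adjoint (∑ i, a i • A i) * (∑ i, a i • A i)
      - adjoint (∑ i, b i • A i) * (∑ i, b i • A i)).IsPositive := by
  have hadj : ∀ (r : ℝ) (T : H →L[ℂ] H), adjoint (r • T) = r • adjoint T := by
    intro r T
    rw [← star_eq_adjoint, star_smul, star_trivial, star_eq_adjoint]
  constructor
  · rw [← ContinuousLinearMap.isSelfAdjoint_iff_isSymmetric, isSelfAdjoint_iff]
    simp [star_sub, star_sum, star_smul, star_mul, star_eq_adjoint, adjoint_adjoint, hadj]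
  · intro x
    letI : InnerProductSpace ℝ H := InnerProductSpace.complexToReal
    have key := aux_psd_gram (E := H) h (fun i => A i x)
    rw [reApplyInnerSelf]
    have hre : ∀ u v : H, (inner ℝ u v : ℝ) = RCLike.re (inner ℂ u v : ℂ) := fun u v => rfl
    have expand : ∀ (v : Fin n → ℝ),
        ‖(∑ i, v i • A i) x‖ ^ 2
          = ∑ i, ∑ j, v i * v j * (inner ℝ (A i x) (A j x) : ℝ) := by
      intro v
      rw [← real_inner_self_eq_norm_sq]
      simp only [ContinuousLinearMap.sum_apply, ContinuousLinearMap.smul_apply,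
        sum_inner, inner_sum, real_inner_smul_left, real_inner_smul_right]
      refine Finset.sum_congr rfl fun i _ => Finset.sum_congr rfl fun j _ => ?_
      rw [real_inner_comm ((A j) x) ((A i) x)]
      ring
    have hA2 : ∀ (v : Fin n → ℝ),
        RCLike.re (inner ℂ ((adjoint (∑ i, v i • A i) * (∑ i, v i • A i)) x) x : ℂ)
          = ‖(∑ i, v i • A i) x‖ ^ 2 := by
      intro v
      rw [ContinuousLinearMap.mul_apply, adjoint_inner_left, ← hre,
        real_inner_self_eq_norm_sq]
    have hC : RCLike.re (inner ℂ ((∑ i, c i • (adjoint (A i) * A i)) x) x : ℂ)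
        = ∑ i, c i * ‖A i x‖ ^ 2 := by
      rw [← hre]
      simp only [ContinuousLinearMap.sum_apply, ContinuousLinearMap.smul_apply,
        sum_inner, real_inner_smul_left]
      refine Finset.sum_congr rfl fun i _ => ?_
      rw [ContinuousLinearMap.mul_apply]
      congr 1
      rw [hre, adjoint_inner_left, ← hre, real_inner_self_eq_norm_sq]
    simp only [ContinuousLinearMap.sub_apply, inner_sub_left, map_sub]
    rw [hC, hA2 a, hA2 b, expand a, expand b]
    have hMij : ∀ i j, (Matrix.diagonal c - Matrix.vecMulVec a a - Matrix.vecMulVec b b) i j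
        = (if i = j then c i else 0) - a i * a j - b i * b j := by
      intro i j
      simp [Matrix.sub_apply, Matrix.diagonal, Matrix.vecMulVec_apply, Matrix.of_apply]
    calc (0:ℝ) ≤ ∑ i, ∑ j, (Matrix.diagonal c - Matrix.vecMulVec a a - Matrix.vecMulVec b b) i j
            * (inner ℝ (A i x) (A j x) : ℝ) := key
      _ = ∑ i, c i * ‖A i x‖ ^ 2 - ∑ i, ∑ j, a i * a j * (inner ℝ (A i x) (A j x) : ℝ)
            - ∑ i, ∑ j, b i * b j * (inner ℝ (A i x) (A j x) : ℝ) := by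
          simp only [hMij, sub_mul, ite_mul, zero_mul, Finset.sum_sub_distrib,
            Finset.sum_ite_eq, Finset.mem_univ, if_true]
          congr 2
          exact Finset.sum_congr rfl fun i _ => by rw [real_inner_self_eq_norm_sq]
end

section
/- Let A, B be bounded linear operators on a Hilbert space and let t ≥ 1 or t < 0. Then |A - B|^2 + |tA + B|^2 ≥ (1+t)|A|^2 + (1 + 1/t)|B|^2 in the operator order. -/
open ContinuousLinearMap in
theorem bohr_large_t {H : Type*} [NormedAddCommGroup H] [InnerProductSpace ℂ H]
    [CompleteSpace H] (A B : H →L[ℂ] H) (t : ℝ) (ht : 1 ≤ t ∨ t < 0) :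
    (adjoint (A - B) * (A - B) + adjoint (t • A + B) * (t • A + B)
      - (1 + t) • (adjoint A * A) - (1 + 1 / t) • (adjoint B * B)).IsPositive := by
  have ht0 : t ≠ 0 := by rcases ht with h | h <;> nlinarith
  have hc : 0 ≤ (t - 1) / t := by
    rw [div_nonneg_iff]
    rcases ht with h | h
    · left; constructor <;> linarith
    · right; constructor <;> linarith
  set T := t • A + B with hT
  have key : (adjoint (A - B) * (A - B) + adjoint T * T
      - (1 + t) • (adjoint A * A) - (1 + 1 / t) • (adjoint B * B))
      = ((t - 1) / t) • (adjoint T * T) := by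
    have hsmul : ∀ C : H →L[ℂ] H, adjoint (t • C) = t • adjoint C := by
      intro C
      rw [← star_eq_adjoint, ← star_eq_adjoint, star_smul, star_trivial]
    rw [hT, map_sub, map_add, hsmul]
    simp only [sub_mul, mul_sub, add_mul, mul_add, smul_mul_assoc, mul_smul_comm,
      smul_smul]
    match_scalars <;> field_simp <;> ring
  rw [key]
  constructor
  · have hsa : IsSelfAdjoint (adjoint T * T) := by
      rw [IsSelfAdjoint, star_mul, star_eq_adjoint, star_eq_adjoint, adjoint_adjoint]
    rw [← isSelfAdjoint_iff_isSymmetric, IsSelfAdjoint, star_smul, star_trivial, hsa.star_eq]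
  · intro x
    rw [reApplyInnerSelf]
    rw [smul_apply, RCLike.real_smul_eq_coe_smul (K := ℂ), inner_smul_left]
    simp only [mul_apply_eq_comp, comp_apply, adjoint_inner_left, RCLike.conj_ofReal, RCLike.mul_re,
      RCLike.ofReal_re, RCLike.ofReal_im, zero_mul, sub_zero, inner_self_eq_norm_sq]
    exact mul_nonneg hc (sq_nonneg _)
end

section
/- Let A_1, ..., A_n be bounded linear operators on a Hilbert space and r_1, ..., r_n ≥ 1 with ∑_{i=1}^n 1/r_i = 1. Then |∑_{i=1}^n A_i|^2 ≤ ∑_{i=1}^n r_i |A_i|^2 in the operator order. -/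
open ContinuousLinearMap in
theorem multiple_bohr {H : Type*} [NormedAddCommGroup H] [InnerProductSpace ℂ H]
    [CompleteSpace H] (n : ℕ) (A : Fin n → (H →L[ℂ] H)) (r : Fin n → ℝ)
    (hr : ∀ i, 1 ≤ r i) (hsum : ∑ i, 1 / r i = 1) :
    ((∑ i, r i • (adjoint (A i) * A i))
      - adjoint (∑ i, A i) * (∑ i, A i)).IsPositive := by
  have hrpos : ∀ i, (0:ℝ) < r i := fun i => lt_of_lt_of_le one_pos (hr i)
  constructor
  · rw [← ContinuousLinearMap.isSelfAdjoint_iff_isSymmetric, isSelfAdjoint_iff]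
    simp [star_sub, star_sum, star_smul, star_mul, ContinuousLinearMap.star_eq_adjoint,
      adjoint_adjoint]
  · intro x
    rw [ContinuousLinearMap.reApplyInnerSelf_apply]
    simp only [ContinuousLinearMap.sub_apply, ContinuousLinearMap.mul_apply,
      inner_sub_left, map_sub, adjoint_inner_left, inner_self_eq_norm_sq, sub_nonneg]
    have hL : RCLike.re (inner ℂ ((∑ i, r i • (adjoint (A i) * A i)) x) x : ℂ)
        = ∑ i, r i * ‖A i x‖^2 := by
      rw [ContinuousLinearMap.sum_apply, sum_inner, map_sum]
      refine Finset.sum_congr rfl fun i _ => ?_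
      rw [ContinuousLinearMap.smul_apply, ContinuousLinearMap.mul_apply,
        RCLike.real_smul_eq_coe_smul (K := ℂ), inner_smul_left, RCLike.conj_ofReal,
        adjoint_inner_left]
      simp [RCLike.re_ofReal_mul, inner_self_eq_norm_sq]
      left
      exact_mod_cast Complex.ofReal_re (‖A i x‖ ^ (2 : ℕ))
    rw [hL]
    have key : (∑ i, ‖A i x‖)^2 ≤ ∑ i, r i * ‖A i x‖^2 := by
      have h := Finset.sum_mul_sq_le_sq_mul_sq Finset.univ
        (fun i => 1 / Real.sqrt (r i)) (fun i => Real.sqrt (r i) * ‖A i x‖)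
      have e1 : ∀ i : Fin n, (1 / Real.sqrt (r i)) * (Real.sqrt (r i) * ‖A i x‖) = ‖A i x‖ := by
        intro i
        have : Real.sqrt (r i) ≠ 0 := Real.sqrt_ne_zero'.2 (hrpos i)
        field_simp
      have e2 : ∀ i : Fin n, (1 / Real.sqrt (r i))^2 = 1 / r i := by
        intro i
        rw [div_pow, one_pow, Real.sq_sqrt (hrpos i).le]
      have e3 : ∀ i : Fin n, (Real.sqrt (r i) * ‖A i x‖)^2 = r i * ‖A i x‖^2 := by
        intro i
        rw [mul_pow, Real.sq_sqrt (hrpos i).le]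
      simp only [e1, e2, e3, hsum, one_mul] at h
      exact h
    calc ‖(∑ i, A i) x‖^2 ≤ (∑ i, ‖A i x‖)^2 := by
          apply pow_le_pow_left₀ (norm_nonneg _)
          simpa using norm_sum_le Finset.univ (fun i => A i x)
      _ ≤ _ := key
end

section
/- Let D = diag(r_1, ..., r_n) with r_i ≥ 1 and ∑_{i=1}^n 1/r_i = 1, and let C be the n×n matrix with all entries equal to 1. Then D - C is positive semidefinite. -/
theorem diag_dominates_allones (n : ℕ) (r : Fin n → ℝ) (hr : ∀ i, 1 ≤ r i)
    (hsum : ∑ i, 1 / r i = 1) :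
    (Matrix.diagonal r - Matrix.of fun _ _ : Fin n => (1 : ℝ)).PosSemidef := by
  rw [Matrix.posSemidef_iff_dotProduct_mulVec]
  constructor
  · apply Matrix.IsHermitian.sub
    · exact Matrix.isHermitian_diagonal_iff.mpr fun i => IsSelfAdjoint.all _
    · ext i j; simp [Matrix.conjTranspose]
  · intro x
    have hr0 : ∀ i, 0 < r i := fun i => lt_of_lt_of_le one_pos (hr i)
    have key : (∑ i, x i) ^ 2 ≤ (∑ i, 1 / r i) * ∑ i, r i * x i ^ 2 := by
      apply Finset.sum_sq_le_sum_mul_sum_of_sq_eq_mul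
      · intro i _; have := hr0 i; positivity
      · intro i _; have := hr0 i; positivity
      · intro i _; have := (hr0 i).ne'; field_simp
    rw [hsum, one_mul] at key
    have h2 : dotProduct (star x)
        ((Matrix.diagonal r - Matrix.of fun _ _ : Fin n => (1 : ℝ)).mulVec x)
        = (∑ i, r i * x i ^ 2) - (∑ i, x i) ^ 2 := by
      rw [Matrix.sub_mulVec, dotProduct_sub]
      congr 1
      · simp only [dotProduct, Matrix.mulVec_diagonal, star, Pi.star_apply, star_trivial]
        exact Finset.sum_congr rfl fun i _ => by ring
      · simp [dotProduct, Matrix.mulVec, sq, Finset.sum_mul, Finset.mul_sum]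
        rw [Finset.sum_comm]
    rw [h2]
    linarith
end

section
/- Let a_1, a_2, b_1, b_2, p_1, p_2 be real numbers with p_1 ≥ a_1^2 + b_1^2, p_2 ≥ a_2^2 + b_2^2, and (p_1 - (a_1^2 + b_1^2))(p_2 - (a_2^2 + b_2^2)) ≥ (a_1 a_2 + b_1 b_2)^2. Then for all bounded linear operators A, B on a Hilbert space, |a_1 A + a_2 B|^2 + |b_1 A + b_2 B|^2 ≤ p_1 |A|^2 + p_2 |B|^2. -/
open scoped InnerProductSpace in
private lemma two_operator_bohr_aux {H : Type*} [NormedAddCommGroup H]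
    [InnerProductSpace ℂ H]
    (a₁ a₂ b₁ b₂ p₁ p₂ : ℝ)
    (h1 : a₁ ^ 2 + b₁ ^ 2 ≤ p₁) (h2 : a₂ ^ 2 + b₂ ^ 2 ≤ p₂)
    (h3 : (a₁ * a₂ + b₁ * b₂) ^ 2 ≤ (p₁ - (a₁ ^ 2 + b₁ ^ 2)) * (p₂ - (a₂ ^ 2 + b₂ ^ 2)))
    (u v : H) :
    0 ≤ p₁ * ‖u‖^2 + p₂ * ‖v‖^2 - ‖a₁ • u + a₂ • v‖^2 - ‖b₁ • u + b₂ • v‖^2 := by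
  have expand : ∀ c d : ℝ, ‖c • u + d • v‖^2
      = c^2 * ‖u‖^2 + 2 * (c * d) * RCLike.re (⟪u, v⟫_ℂ) + d^2 * ‖v‖^2 := by
    intro c d
    rw [@norm_add_sq ℂ]
    have e1 : ‖c • u‖ = |c| * ‖u‖ := by rw [norm_smul]; simp
    have e2 : ‖d • v‖ = |d| * ‖v‖ := by rw [norm_smul]; simp
    have e3 : ⟪c • u, d • v⟫_ℂ = (c * d : ℝ) • ⟪u, v⟫_ℂ := by
      simp only [RCLike.real_smul_eq_coe_smul (K := ℂ)]
      rw [inner_smul_left, inner_smul_right]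
      simp [Complex.conj_ofReal, Complex.real_smul]
      ring
    rw [e1, e2, e3]
    simp [mul_pow, sq_abs]
    ring
  rw [expand, expand]
  set t := RCLike.re (⟪u, v⟫_ℂ) with ht
  have habs : |t| ≤ ‖u‖ * ‖v‖ := by
    calc |t| ≤ ‖⟪u, v⟫_ℂ‖ := by rw [ht]; exact RCLike.abs_re_le_norm (⟪u, v⟫_ℂ)
    _ ≤ ‖u‖ * ‖v‖ := norm_inner_le_norm u v
  have h4 : t^2 ≤ ‖u‖^2 * ‖v‖^2 := by nlinarith [abs_nonneg t, sq_abs t]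
  nlinarith [sq_nonneg ((p₁ - a₁^2 - b₁^2) * ‖u‖^2 - (p₂ - a₂^2 - b₂^2) * ‖v‖^2),
    sq_nonneg ((a₁*a₂+b₁*b₂) * t), sq_nonneg (‖u‖*‖v‖), sq_nonneg t,
    mul_nonneg (mul_nonneg (sub_nonneg.2 h1) (sub_nonneg.2 h2)) (sq_nonneg (‖u‖*‖v‖ - |t|)),
    mul_nonneg (sub_nonneg.2 h1) (sq_nonneg ‖u‖), mul_nonneg (sub_nonneg.2 h2) (sq_nonneg ‖v‖),
    sq_nonneg ((p₁ - a₁^2 - b₁^2) * ‖u‖^2 + (p₂ - a₂^2 - b₂^2) * ‖v‖^2 - 2*(a₁*a₂+b₁*b₂)*t)]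

open ContinuousLinearMap in
theorem two_operator_bohr {H : Type*} [NormedAddCommGroup H] [InnerProductSpace ℂ H]
    [CompleteSpace H] (a₁ a₂ b₁ b₂ p₁ p₂ : ℝ)
    (h1 : a₁ ^ 2 + b₁ ^ 2 ≤ p₁) (h2 : a₂ ^ 2 + b₂ ^ 2 ≤ p₂)
    (h3 : (a₁ * a₂ + b₁ * b₂) ^ 2 ≤ (p₁ - (a₁ ^ 2 + b₁ ^ 2)) * (p₂ - (a₂ ^ 2 + b₂ ^ 2)))
    (A B : H →L[ℂ] H) :
    (p₁ • (adjoint A * A) + p₂ • (adjoint B * B)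
      - adjoint (a₁ • A + a₂ • B) * (a₁ • A + a₂ • B)
      - adjoint (b₁ • A + b₂ • B) * (b₁ • A + b₂ • B)).IsPositive := by
  open scoped InnerProductSpace in
  rw [isPositive_iff_complex]
  intro x
  have sqinner : ∀ (C : H →L[ℂ] H), ⟪(adjoint C * C) x, x⟫_ℂ = ((‖C x‖^2 : ℝ) : ℂ) := by
    intro C
    rw [ContinuousLinearMap.mul_apply, adjoint_inner_left, inner_self_eq_norm_sq_to_K]
    norm_cast
  have smulinner : ∀ (p : ℝ) (C : H →L[ℂ] H), ⟪(p • C) x, x⟫_ℂ = (p : ℂ) * ⟪C x, x⟫_ℂ := by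
    intro p C
    rw [smul_apply]
    simp only [RCLike.real_smul_eq_coe_smul (K := ℂ)]
    rw [inner_smul_left]
    simp [Complex.conj_ofReal]
  have key : ⟪(p₁ • (adjoint A * A) + p₂ • (adjoint B * B)
      - adjoint (a₁ • A + a₂ • B) * (a₁ • A + a₂ • B)
      - adjoint (b₁ • A + b₂ • B) * (b₁ • A + b₂ • B)) x, x⟫_ℂ
      = ((p₁ * ‖A x‖^2 + p₂ * ‖B x‖^2 - ‖a₁ • A x + a₂ • B x‖^2
          - ‖b₁ • A x + b₂ • B x‖^2 : ℝ) : ℂ) := by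
    simp only [sub_apply, inner_sub_left, add_apply, inner_add_left, smulinner, sqinner]
    simp only [add_apply, smul_apply]
    push_cast
    ring
  rw [key]
  have hnn := two_operator_bohr_aux a₁ a₂ b₁ b₂ p₁ p₂ h1 h2 h3 (A x) (B x)
  constructor
  · rw [RCLike.re_to_complex, Complex.ofReal_re]
  · rw [RCLike.re_to_complex, Complex.ofReal_re]
    exact hnn
end

section
/- Let r > 1 and a_1, ..., a_n > 0. Then for all complex numbers z_1, ..., z_n, |∑_{i=1}^n z_i|^r ≤ (∑_{i=1}^n a_i^{1/(1-r)})^{r-1} · ∑_{i=1}^n a_i |z_i|^r. -/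
theorem vasic_keckic (r : ℝ) (hr : 1 < r) (n : ℕ) (a : Fin n → ℝ)
    (ha : ∀ i, 0 < a i) (z : Fin n → ℂ) :
    ‖∑ i, z i‖ ^ r
      ≤ (∑ i, a i ^ (1 / (1 - r))) ^ (r - 1) * ∑ i, a i * ‖z i‖ ^ r := by
  have hr0 : (0:ℝ) < r := lt_trans one_pos hr
  have hr1 : (0:ℝ) < r - 1 := by linarith
  set p : ℝ := r / (r - 1) with hp
  have hpq : p.HolderConjugate r := (Real.HolderConjugate.conjExponent hr).symm
  set f : Fin n → ℝ := fun i => a i ^ (-(1/r)) with hf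
  set g : Fin n → ℝ := fun i => a i ^ (1/r) * ‖z i‖ with hg
  have key := Real.inner_le_Lp_mul_Lq_of_nonneg (s := Finset.univ) hpq
    (f := f) (g := g)
    (fun i _ => Real.rpow_nonneg (ha i).le _)
    (fun i _ => mul_nonneg (Real.rpow_nonneg (ha i).le _) (norm_nonneg _))
  have hfg : ∀ i, f i * g i = ‖z i‖ := by
    intro i
    rw [hf, hg, ← mul_assoc, ← Real.rpow_add (ha i)]
    simp
  have hfp : ∀ i, f i ^ p = a i ^ (1 / (1 - r)) := by
    intro i
    rw [hf]; dsimp only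
    rw [← Real.rpow_mul (ha i).le]
    congr 1
    rw [hp, show (1:ℝ) - r = -(r - 1) by ring, div_neg, neg_mul, neg_inj,
      div_mul_div_comm, one_mul, div_eq_div_iff (by positivity) hr1.ne']
    ring
  have hgq : ∀ i, g i ^ r = a i * ‖z i‖ ^ r := by
    intro i
    rw [hg, Real.mul_rpow (Real.rpow_nonneg (ha i).le _) (norm_nonneg _),
      ← Real.rpow_mul (ha i).le]
    rw [one_div, inv_mul_cancel₀ hr0.ne', Real.rpow_one]
  simp only [hfg, hfp, hgq] at key
  have h1 : ‖∑ i, z i‖ ≤ ∑ i, ‖z i‖ :=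
    norm_sum_le _ _
  have hX : (0:ℝ) ≤ ∑ i, a i ^ (1 / (1 - r)) :=
    Finset.sum_nonneg fun i _ => Real.rpow_nonneg (ha i).le _
  have hY : (0:ℝ) ≤ ∑ i, a i * ‖z i‖ ^ r :=
    Finset.sum_nonneg fun i _ =>
      mul_nonneg (ha i).le (Real.rpow_nonneg (norm_nonneg _) _)
  calc ‖∑ i, z i‖ ^ r
      ≤ (∑ i, ‖z i‖) ^ r :=
        Real.rpow_le_rpow (norm_nonneg _) h1 hr0.le
    _ ≤ ((∑ i, a i ^ (1 / (1 - r))) ^ (1/p) * (∑ i, a i * ‖z i‖ ^ r) ^ (1/r)) ^ r := by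
        apply Real.rpow_le_rpow (Finset.sum_nonneg fun i _ => norm_nonneg _) key hr0.le
    _ = (∑ i, a i ^ (1 / (1 - r))) ^ (r - 1) * ∑ i, a i * ‖z i‖ ^ r := by
        rw [Real.mul_rpow (Real.rpow_nonneg hX _) (Real.rpow_nonneg hY _),
          ← Real.rpow_mul hX, ← Real.rpow_mul hY,
          show 1/r*r = 1 by field_simp,
          show 1/p*r = r - 1 by rw [hp]; field_simp,
          Real.rpow_one]
end

section
/- Let 1 < r ≤ 2, a_1, ..., a_n > 0, let x_1, ..., x_n be vectors in a Hilbert space H satisfying ∑_{i=1}^n a_i^{1/(1-r)} ‖x_i‖^2 ≤ ∑_{i=1}^n a_i^{1/(1-r)}, and let A_1, ..., A_n be positive operators on H. Then (∑_{i=1}^n ⟨A_i x_i, x_i⟩)^r ≤ (∑_{i=1}^n a_i^{1/(1-r)})^{r-1} · ∑_{i=1}^n a_i ⟨A_i^r x_i, x_i⟩. -/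
lemma bohr_tangent_scalar {r : ℝ} (hr : 1 < r) {c t : ℝ} (hc : 0 ≤ c) (ht : 0 ≤ t) :
    r * c ^ (r - 1) * t - (r - 1) * c ^ r ≤ t ^ r := by
  have hr0 : (0:ℝ) < r := by linarith
  have hrm : r - 1 ≠ 0 := by intro h; nlinarith [sub_eq_zero.mp h]
  have hpq : r.HolderConjugate (r / (r - 1)) := Real.HolderConjugate.conjExponent hr
  have hY := Real.young_inequality_of_nonneg ht (Real.rpow_nonneg hc (r - 1)) hpq
  have hcr : (c ^ (r - 1)) ^ (r / (r - 1)) = c ^ r := by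
    rw [← Real.rpow_mul hc]
    congr 1
    field_simp
  rw [hcr] at hY
  have hY' : r * (t * c ^ (r - 1)) ≤ t ^ r + (r - 1) * c ^ r := by
    calc r * (t * c ^ (r - 1)) ≤ r * (t ^ r / r + c ^ r / (r / (r - 1))) :=
          mul_le_mul_of_nonneg_left hY hr0.le
      _ = t ^ r + (r - 1) * c ^ r := by field_simp
  linarith

open ContinuousLinearMap in
lemma bohr_reApply_aux {H : Type*} [NormedAddCommGroup H] [InnerProductSpace ℂ H]
    [CompleteSpace H] (α β : ℝ) (T : H →L[ℂ] H) (x : H) :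
    (α • T - algebraMap ℝ (H →L[ℂ] H) β).reApplyInnerSelf x
      = α * T.reApplyInnerSelf x - β * ‖x‖ ^ 2 := by
  rw [reApplyInnerSelf_apply, reApplyInnerSelf_apply, sub_apply, smul_apply,
    Algebra.algebraMap_eq_smul_one, smul_apply, ContinuousLinearMap.one_apply, inner_sub_left,
    RCLike.real_smul_eq_coe_smul (K := ℂ) α, RCLike.real_smul_eq_coe_smul (K := ℂ) β,
    inner_smul_left, inner_smul_left, RCLike.conj_ofReal, RCLike.conj_ofReal, map_sub,
    RCLike.re_ofReal_mul, RCLike.re_ofReal_mul, ← inner_self_eq_norm_sq (𝕜 := ℂ)]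

open ContinuousLinearMap in
lemma bohr_reApply_mono {H : Type*} [NormedAddCommGroup H] [InnerProductSpace ℂ H]
    [CompleteSpace H] {S T : H →L[ℂ] H} (h : S ≤ T) (x : H) :
    S.reApplyInnerSelf x ≤ T.reApplyInnerSelf x := by
  have h2 := ((ContinuousLinearMap.le_def S T).mp h).2 x
  simp only [reApplyInnerSelf_apply, sub_apply, inner_sub_left, map_sub] at h2
  simp only [reApplyInnerSelf_apply]
  linarith

open ContinuousLinearMap in
lemma bohr_tangent_op {H : Type*} [NormedAddCommGroup H] [InnerProductSpace ℂ H]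
    [CompleteSpace H] {r : ℝ} (hr : 1 < r) (T : H →L[ℂ] H) (hT : T.IsPositive) {c : ℝ}
    (hc : 0 ≤ c) (x : H) :
    r * c ^ (r - 1) * T.reApplyInnerSelf x - (r - 1) * c ^ r * ‖x‖ ^ 2
      ≤ (cfc (fun s : ℝ => s ^ r) T).reApplyInnerSelf x := by
  have hTnn : (0 : H →L[ℂ] H) ≤ T := (ContinuousLinearMap.nonneg_iff_isPositive T).mpr hT
  have hspec : ∀ t ∈ spectrum ℝ T, (0:ℝ) ≤ t := fun t ht => spectrum_nonneg_of_nonneg hTnn ht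
  have hcont : ContinuousOn (fun t : ℝ => t ^ r) (spectrum ℝ T) := fun t ht =>
    ((Real.continuousAt_rpow_const t r (Or.inr (by linarith))).continuousWithinAt)
  have hle : cfc (fun t : ℝ => r * c ^ (r - 1) * t - (r - 1) * c ^ r) T
      ≤ cfc (fun t : ℝ => t ^ r) T :=
    cfc_mono (fun t ht => bohr_tangent_scalar hr hc (hspec t ht)) (by fun_prop) hcont
  have haff : cfc (fun t : ℝ => r * c ^ (r - 1) * t - (r - 1) * c ^ r) T
      = (r * c ^ (r - 1)) • T - algebraMap ℝ (H →L[ℂ] H) ((r - 1) * c ^ r) := by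
    rw [cfc_sub (fun t : ℝ => r * c ^ (r - 1) * t) (fun _ : ℝ => (r - 1) * c ^ r) T,
      cfc_const_mul_id _ T hT.isSelfAdjoint, cfc_const _ T hT.isSelfAdjoint]
  rw [haff] at hle
  calc r * c ^ (r - 1) * T.reApplyInnerSelf x - (r - 1) * c ^ r * ‖x‖ ^ 2
      = ((r * c ^ (r - 1)) • T
          - algebraMap ℝ (H →L[ℂ] H) ((r - 1) * c ^ r)).reApplyInnerSelf x :=
        (bohr_reApply_aux _ _ T x).symm
    _ ≤ _ := bohr_reApply_mono hle x

theorem bohr_vector_states {H : Type*} [NormedAddCommGroup H] [InnerProductSpace ℂ H]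
    [CompleteSpace H] (r : ℝ) (hr1 : 1 < r) (hr2 : r ≤ 2) (n : ℕ)
    (a : Fin n → ℝ) (ha : ∀ i, 0 < a i) (x : Fin n → H)
    (hx : ∑ i, a i ^ (1 / (1 - r)) * ‖x i‖ ^ 2 ≤ ∑ i, a i ^ (1 / (1 - r)))
    (A : Fin n → (H →L[ℂ] H)) (hA : ∀ i, (A i).IsPositive) :
    (∑ i, (A i).reApplyInnerSelf (x i)) ^ r
      ≤ (∑ i, a i ^ (1 / (1 - r))) ^ (r - 1)
          * ∑ i, a i * (cfc (fun s : ℝ => s ^ r) (A i)).reApplyInnerSelf (x i) := by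
  have hrm : (1:ℝ) - r ≠ 0 := by intro h; nlinarith [sub_eq_zero.mp h]
  have hw_pos : ∀ i, 0 < a i ^ (1 / (1 - r)) := fun i => Real.rpow_pos_of_pos (ha i) _
  set W : ℝ := ∑ i, a i ^ (1 / (1 - r)) with hW
  have hW_nonneg : 0 ≤ W := Finset.sum_nonneg fun i _ => (hw_pos i).le
  set S : ℝ := ∑ i, (A i).reApplyInnerSelf (x i) with hS
  have hS_nonneg : 0 ≤ S := Finset.sum_nonneg fun i _ => (hA i).2 (x i)
  have hAr_nonneg : ∀ i, 0 ≤ (cfc (fun s : ℝ => s ^ r) (A i)).reApplyInnerSelf (x i) := by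
    intro i
    have h0 : (0 : H →L[ℂ] H) ≤ cfc (fun s : ℝ => s ^ r) (A i) :=
      cfc_nonneg fun t ht => Real.rpow_nonneg
        (spectrum_nonneg_of_nonneg
          ((ContinuousLinearMap.nonneg_iff_isPositive (A i)).mpr (hA i)) ht) r
    exact ((ContinuousLinearMap.nonneg_iff_isPositive _).mp h0).2 (x i)
  have hRHS_nonneg : 0 ≤ ∑ i, a i * (cfc (fun s : ℝ => s ^ r) (A i)).reApplyInnerSelf (x i) :=
    Finset.sum_nonneg fun i _ => mul_nonneg (ha i).le (hAr_nonneg i)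
  rcases eq_or_lt_of_le hS_nonneg with hS0 | hSpos
  · rw [← hS0, Real.zero_rpow (by linarith)]
    exact mul_nonneg (Real.rpow_nonneg hW_nonneg _) hRHS_nonneg
  · have hn : n ≠ 0 := by
      rintro rfl
      have : S = 0 := by rw [hS]; simp
      linarith
    have : NeZero n := ⟨hn⟩
    have hW_pos : 0 < W := Finset.sum_pos (fun i _ => hw_pos i) Finset.univ_nonempty
    set m : ℝ := S / W with hm
    have hm_pos : 0 < m := div_pos hSpos hW_pos
    have haw : ∀ i, a i * (a i ^ (1 / (1 - r))) ^ (r - 1) = 1 := by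
      intro i
      rw [← Real.rpow_mul (ha i).le]
      have he : 1 / (1 - r) * (r - 1) = -1 := by field_simp; ring
      rw [he, Real.rpow_neg_one]
      exact mul_inv_cancel₀ (ha i).ne'
    have hwr : ∀ i, (a i ^ (1 / (1 - r))) ^ r
        = (a i ^ (1 / (1 - r))) ^ (r - 1) * a i ^ (1 / (1 - r)) := by
      intro i
      have h := Real.rpow_add_one (hw_pos i).ne' (r - 1)
      rwa [sub_add_cancel] at h
    have hmr : m ^ r = m ^ (r - 1) * m := by
      have h := Real.rpow_add_one hm_pos.ne' (r - 1)
      rwa [sub_add_cancel] at h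
    have key : ∀ i, r * m ^ (r - 1) * (A i).reApplyInnerSelf (x i)
        - (r - 1) * m ^ r * (a i ^ (1 / (1 - r)) * ‖x i‖ ^ 2)
        ≤ a i * (cfc (fun t : ℝ => t ^ r) (A i)).reApplyInnerSelf (x i) := by
      intro i
      have hc : (0:ℝ) ≤ m * a i ^ (1 / (1 - r)) := mul_nonneg hm_pos.le (hw_pos i).le
      have h1 := bohr_tangent_op hr1 (A i) (hA i) hc (x i)
      have h2 := mul_le_mul_of_nonneg_left h1 (ha i).le
      have e1 : (m * a i ^ (1 / (1 - r))) ^ (r - 1)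
          = m ^ (r - 1) * (a i ^ (1 / (1 - r))) ^ (r - 1) :=
        Real.mul_rpow hm_pos.le (hw_pos i).le
      have e2 : (m * a i ^ (1 / (1 - r))) ^ r = m ^ r * (a i ^ (1 / (1 - r))) ^ r :=
        Real.mul_rpow hm_pos.le (hw_pos i).le
      calc r * m ^ (r - 1) * (A i).reApplyInnerSelf (x i)
            - (r - 1) * m ^ r * (a i ^ (1 / (1 - r)) * ‖x i‖ ^ 2)
          = a i * (r * (m * a i ^ (1 / (1 - r))) ^ (r - 1) * (A i).reApplyInnerSelf (x i)
              - (r - 1) * (m * a i ^ (1 / (1 - r))) ^ r * ‖x i‖ ^ 2) := by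
            rw [e1, e2, hwr i]
            linear_combination ((r - 1) * m ^ r * (a i ^ (1 / (1 - r))) * ‖x i‖ ^ 2
              - r * m ^ (r - 1) * (A i).reApplyInnerSelf (x i)) * haw i
        _ ≤ a i * (cfc (fun t : ℝ => t ^ r) (A i)).reApplyInnerSelf (x i) := h2
    have hsum := Finset.sum_le_sum fun i (_ : i ∈ Finset.univ) => key i
    rw [Finset.sum_sub_distrib, ← Finset.mul_sum, ← Finset.mul_sum, ← hS] at hsum
    have hstep : m ^ r * W ≤ ∑ i, a i * (cfc (fun t : ℝ => t ^ r) (A i)).reApplyInnerSelf (x i) := by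
      have hx' : (r - 1) * m ^ r * (∑ i, a i ^ (1 / (1 - r)) * ‖x i‖ ^ 2)
          ≤ (r - 1) * m ^ r * W :=
        mul_le_mul_of_nonneg_left hx
          (mul_nonneg (by linarith) (Real.rpow_nonneg hm_pos.le r))
      have hSm : S = m * W := by rw [hm]; field_simp
      calc m ^ r * W = r * m ^ (r - 1) * S - (r - 1) * m ^ r * W := by
            rw [hSm, hmr]; ring
        _ ≤ r * m ^ (r - 1) * S - (r - 1) * m ^ r * (∑ i, a i ^ (1 / (1 - r)) * ‖x i‖ ^ 2) := by
            linarith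
        _ ≤ _ := hsum
    have hSr : S ^ r = W ^ (r - 1) * (m ^ r * W) := by
      have hSm : S = m * W := by rw [hm]; field_simp
      rw [hSm, Real.mul_rpow hm_pos.le hW_nonneg]
      have : W ^ r = W ^ (r - 1) * W := by
        have h := Real.rpow_add_one hW_pos.ne' (r - 1)
        rwa [sub_add_cancel] at h
      rw [this]; ring
    rw [hSr]
    exact mul_le_mul_of_nonneg_left hstep (Real.rpow_nonneg hW_nonneg _)
end

section
/- Let f be a convex function on ℝ with f(0) ≤ 0 and f(uv) ≤ f(u)f(v) for all real u, v. Let A_1, ..., A_ℓ be n×n Hermitian matrices and X_1, ..., X_ℓ be n×n complex matrices with 0 < ∑_{i=1}^ℓ α_i X_i* X_i ≤ I_n, where α_i > 0. Then for 1 ≤ k ≤ n, ∑_{j=1}^k λ_j(f(∑_{i=1}^ℓ X_i* A_i X_i)) ≤ ∑_{j=1}^k λ_j(∑_{i=1}^ℓ α_i f(α_i^{-1}) X_i* f(A_i) X_i). -/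
open Matrix ComplexOrder

lemma entry_conj_diag {n : ℕ} (C : Matrix (Fin n) (Fin n) ℂ) (d : Fin n → ℝ) (i : Fin n) :
    (Cᴴ * Matrix.diagonal ((RCLike.ofReal ∘ d : Fin n → ℂ)) * C) i i
      = ((∑ m, d m * Complex.normSq (C m i) : ℝ) : ℂ) := by
  rw [Matrix.mul_apply, Complex.ofReal_sum]
  refine Finset.sum_congr rfl fun m _ => ?_
  rw [Matrix.mul_diagonal, Matrix.conjTranspose_apply, Complex.star_def]
  have h : (starRingEnd ℂ) (C m i) * C m i = (Complex.normSq (C m i) : ℂ) := by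
    rw [mul_comm, Complex.mul_conj]
  push_cast
  calc (starRingEnd ℂ) (C m i) * ((d m : ℂ)) * C m i
      = (d m : ℂ) * ((starRingEnd ℂ) (C m i) * C m i) := by ring
    _ = (d m : ℂ) * (Complex.normSq (C m i) : ℂ) := by rw [h]

lemma col_norm {n : ℕ} (M : Matrix (Fin n) (Fin n) ℂ)
    (hM : M ∈ Matrix.unitaryGroup (Fin n) ℂ) (i : Fin n) :
    ∑ t, Complex.normSq (M t i) = 1 := by
  have h3 : (Mᴴ * M) i i = 1 := by
    rw [← Matrix.star_eq_conjTranspose, Unitary.star_mul_self_of_mem hM]; simp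
  rw [Matrix.mul_apply] at h3
  have hterm : ∀ t, Mᴴ i t * M t i = (Complex.normSq (M t i) : ℂ) := fun t => by
    rw [Matrix.conjTranspose_apply, Complex.star_def, mul_comm, Complex.mul_conj]
  rw [Finset.sum_congr rfl fun t _ => hterm t] at h3
  exact_mod_cast h3

lemma row_norm {n : ℕ} (M : Matrix (Fin n) (Fin n) ℂ)
    (hM : M ∈ Matrix.unitaryGroup (Fin n) ℂ) (t : Fin n) :
    ∑ i, Complex.normSq (M t i) = 1 := by
  have h : (M * Mᴴ) t t = 1 := by
    rw [← Matrix.star_eq_conjTranspose, Unitary.mul_star_self_of_mem hM]; simp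
  rw [Matrix.mul_apply] at h
  have hterm : ∀ i, M t i * Mᴴ i t = (Complex.normSq (M t i) : ℂ) := fun i => by
    rw [Matrix.conjTranspose_apply, Complex.star_def, Complex.mul_conj]
  rw [Finset.sum_congr rfl fun i _ => hterm i] at h
  exact_mod_cast h

lemma jensen_sub {ι : Type*} (f : ℝ → ℝ) (hconv : ConvexOn ℝ Set.univ f) (hf0 : f 0 ≤ 0)
    (s : Finset ι) (w x : ι → ℝ) (hw : ∀ i ∈ s, 0 ≤ w i) (hw1 : ∑ i ∈ s, w i ≤ 1) :
    f (∑ i ∈ s, w i * x i) ≤ ∑ i ∈ s, w i * f (x i) := by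
  have key := hconv.map_add_sum_le (t := s) (w := w) (p := x) (v := 1 - ∑ i ∈ s, w i)
    (q := 0) hw (by ring) (fun i _ => Set.mem_univ _) (by linarith) (Set.mem_univ _)
  simp only [smul_eq_mul, mul_zero, smul_zero, zero_add] at key
  have : (1 - ∑ i ∈ s, w i) * f 0 ≤ 0 :=
    mul_nonpos_of_nonneg_of_nonpos (by linarith) hf0
  calc f (∑ i ∈ s, w i * x i) ≤ (1 - ∑ i ∈ s, w i) * f 0 + ∑ i ∈ s, w i * f (x i) := key
    _ ≤ ∑ i ∈ s, w i * f (x i) := by linarith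

lemma card_filt {n k : ℕ} (hkn : k ≤ n) :
    (Finset.univ.filter (fun j : Fin n => (j : ℕ) < k)).card = k := by
  have : Finset.univ.filter (fun j : Fin n => (j : ℕ) < k)
      = Finset.image (Fin.castLE hkn) Finset.univ := by
    ext j
    simp only [Finset.mem_filter, Finset.mem_univ, true_and, Finset.mem_image]
    constructor
    · intro hj; exact ⟨⟨(j : ℕ), hj⟩, rfl⟩
    · rintro ⟨a, rfl⟩; exact a.2
  rw [this, Finset.card_image_of_injective _ (Fin.castLE_injective hkn), Finset.card_univ,
    Fintype.card_fin]

lemma top_sum {n : ℕ} (ν : Fin n → ℝ) (hν : Antitone ν) (k : ℕ) (hk1 : 1 ≤ k) (hkn : k ≤ n)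
    (c : Fin n → ℝ) (hc0 : ∀ i, 0 ≤ c i) (hc1 : ∀ i, c i ≤ 1) (hsum : ∑ i, c i = k) :
    ∑ i, ν i * c i ≤ ∑ j ∈ Finset.univ.filter (fun j : Fin n => (j : ℕ) < k), ν j := by
  set F := Finset.univ.filter (fun j : Fin n => (j : ℕ) < k) with hF
  have hcard : F.card = k := card_filt hkn
  set t := ν ⟨k - 1, by omega⟩ with ht
  have hin : ∀ i ∈ F, t ≤ ν i := by
    intro i hi
    simp only [hF, Finset.mem_filter] at hi
    exact hν (by simp [Fin.le_def]; omega)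
  have hout : ∀ i ∈ Fᶜ, ν i ≤ t := by
    intro i hi
    simp only [hF, Finset.compl_filter, Finset.mem_filter] at hi
    exact hν (by simp [Fin.le_def]; omega)
  have key1 : ∀ i ∈ F, ν i * c i ≤ ν i - t * (1 - c i) := by
    intro i hi
    nlinarith [hin i hi, hc1 i]
  have key2 : ∀ i ∈ Fᶜ, ν i * c i ≤ t * c i := by
    intro i hi
    nlinarith [hout i hi, hc0 i]
  have hsplit : ∑ i, ν i * c i = ∑ i ∈ F, ν i * c i + ∑ i ∈ Fᶜ, ν i * c i :=
    (Finset.sum_add_sum_compl F _).symm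
  have hcsplit : ∑ i ∈ F, c i + ∑ i ∈ Fᶜ, c i = (k : ℝ) := by
    rw [Finset.sum_add_sum_compl]; exact_mod_cast hsum
  calc ∑ i, ν i * c i ≤ ∑ i ∈ F, (ν i - t * (1 - c i)) + ∑ i ∈ Fᶜ, t * c i := by
        rw [hsplit]
        exact add_le_add (Finset.sum_le_sum key1) (Finset.sum_le_sum key2)
    _ = ∑ i ∈ F, ν i - t * (F.card - ∑ i ∈ F, c i) + t * ∑ i ∈ Fᶜ, c i := by
        rw [Finset.sum_sub_distrib, ← Finset.mul_sum, ← Finset.mul_sum, Finset.sum_sub_distrib]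
        simp only [Finset.sum_const, nsmul_eq_mul, mul_sub]
        ring
    _ = ∑ i ∈ F, ν i := by
        have h2 : (k : ℝ) - ∑ i ∈ F, c i = ∑ i ∈ Fᶜ, c i := by linarith
        rw [hcard, h2]; ring

open Matrix ComplexOrder in
theorem matharu_moslehian_aujla (n ℓ : ℕ) (f : ℝ → ℝ)
    (hconv : ConvexOn ℝ Set.univ f) (hf0 : f 0 ≤ 0)
    (hfmul : ∀ u v : ℝ, f (u * v) ≤ f u * f v)
    (A : Fin ℓ → Matrix (Fin n) (Fin n) ℂ) (hA : ∀ i, (A i).IsHermitian)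
    (X : Fin ℓ → Matrix (Fin n) (Fin n) ℂ) (α : Fin ℓ → ℝ) (hα : ∀ i, 0 < α i)
    (hpos : (∑ i, α i • ((X i)ᴴ * X i)).PosDef)
    (hle : ((1 : Matrix (Fin n) (Fin n) ℂ) - ∑ i, α i • ((X i)ᴴ * X i)).PosSemidef)
    (L R : Matrix (Fin n) (Fin n) ℂ)
    (hL : L = cfc f (∑ i, (X i)ᴴ * A i * X i))
    (hR : R = ∑ i, (α i * f (α i)⁻¹) • ((X i)ᴴ * cfc f (A i) * X i))
    (hLh : L.IsHermitian) (hRh : R.IsHermitian)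
    (μ ν : Fin n → ℝ) (hμa : Antitone μ) (hνa : Antitone ν)
    (hμ : ∃ σ : Equiv.Perm (Fin n), μ = hLh.eigenvalues ∘ σ)
    (hν : ∃ σ : Equiv.Perm (Fin n), ν = hRh.eigenvalues ∘ σ)
    (k : ℕ) (hk1 : 1 ≤ k) (hkn : k ≤ n) :
    ∑ j ∈ Finset.univ.filter (fun j : Fin n => (j : ℕ) < k), μ j
      ≤ ∑ j ∈ Finset.univ.filter (fun j : Fin n => (j : ℕ) < k), ν j := by
  classical
  obtain ⟨σL, hσL⟩ := hμ
  obtain ⟨σR, hσR⟩ := hν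
  set S : Matrix (Fin n) (Fin n) ℂ := ∑ i, (X i)ᴴ * A i * X i with hSdef
  have hS : S.IsHermitian := by
    show Sᴴ = S
    rw [hSdef, conjTranspose_sum]
    exact Finset.sum_congr rfl fun i _ => isHermitian_conjTranspose_mul_mul (X i) (hA i)
  set W : Matrix (Fin n) (Fin n) ℂ := (hS.eigenvectorUnitary : Matrix (Fin n) (Fin n) ℂ)
    with hWdef
  set g : Fin n → ℝ := hS.eigenvalues with hgdef
  set V : Fin ℓ → Matrix (Fin n) (Fin n) ℂ :=
    fun i' => ((hA i').eigenvectorUnitary : Matrix (Fin n) (Fin n) ℂ) with hVdef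
  set e : Fin ℓ → Fin n → ℝ := fun i' => (hA i').eigenvalues with hedef
  set C : Fin ℓ → Matrix (Fin n) (Fin n) ℂ := fun i' => (V i')ᴴ * X i' * W with hCdef
  set q : Fin ℓ → Fin n → Fin n → ℝ :=
    fun i' m i => Complex.normSq (C i' m i) with hqdef
  -- conjugation identities
  have hconj1 : ∀ i', Wᴴ * ((X i')ᴴ * A i' * X i') * W
      = (C i')ᴴ * Matrix.diagonal ((RCLike.ofReal ∘ e i' : Fin n → ℂ)) * (C i') := by
    intro i'
    conv_lhs => rw [(hA i').spectral_theorem, Unitary.conjStarAlgAut_apply]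
    simp only [hCdef, Matrix.star_eq_conjTranspose, Matrix.conjTranspose_mul,
      Matrix.conjTranspose_conjTranspose, Matrix.mul_assoc, hVdef, hedef]
  have hconj2 : ∀ i', Wᴴ * ((X i')ᴴ * cfc f (A i') * X i') * W
      = (C i')ᴴ * Matrix.diagonal ((RCLike.ofReal ∘ (fun m => f (e i' m)) : Fin n → ℂ))
        * (C i') := by
    intro i'
    rw [(hA i').cfc_eq]
    show Wᴴ * ((X i')ᴴ * (((hA i').eigenvectorUnitary : Matrix (Fin n) (Fin n) ℂ) *
      Matrix.diagonal (RCLike.ofReal ∘ f ∘ (hA i').eigenvalues) *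
      star ((hA i').eigenvectorUnitary : Matrix (Fin n) (Fin n) ℂ)) * X i') * W = _
    simp only [hCdef, Matrix.star_eq_conjTranspose, Matrix.conjTranspose_mul,
      Matrix.conjTranspose_conjTranspose, Matrix.mul_assoc, hVdef, hedef]
    rfl
  have hconj3 : ∀ i', Wᴴ * ((X i')ᴴ * X i') * W
      = (C i')ᴴ * Matrix.diagonal ((RCLike.ofReal ∘ (fun _ => (1:ℝ)) : Fin n → ℂ))
        * (C i') := by
    intro i'
    have hV1 : V i' * (V i')ᴴ = 1 := by
      rw [hVdef, ← Matrix.star_eq_conjTranspose]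
      exact Unitary.mul_star_self_of_mem ((hA i').eigenvectorUnitary).2
    have hd1 : Matrix.diagonal ((RCLike.ofReal ∘ (fun _ => (1:ℝ)) : Fin n → ℂ)) = 1 := by
      have : ((RCLike.ofReal ∘ (fun _ => (1:ℝ)) : Fin n → ℂ)) = fun _ => (1:ℂ) := by
        funext m; simp
      rw [this]
      exact Matrix.diagonal_one
    rw [hd1, Matrix.mul_one]
    calc Wᴴ * ((X i')ᴴ * X i') * W
        = Wᴴ * ((X i')ᴴ * (V i' * (V i')ᴴ) * X i') * W := by rw [hV1, Matrix.mul_one]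
      _ = (C i')ᴴ * C i' := by
          simp only [hCdef, Matrix.conjTranspose_mul, Matrix.conjTranspose_conjTranspose,
            Matrix.mul_assoc]
  -- diagonalization of S
  have hWS : Wᴴ * S * W = Matrix.diagonal ((RCLike.ofReal ∘ g : Fin n → ℂ)) := by
    rw [hWdef, hgdef, ← Matrix.star_eq_conjTranspose]
    rw [← hS.conjStarAlgAut_star_eigenvectorUnitary, Unitary.conjStarAlgAut_apply]; simp
  -- eigenvalues of S in terms of q
  have hgq : ∀ i, g i = ∑ i', ∑ m, e i' m * q i' m i := by
    intro i
    have h1 : (Matrix.diagonal ((RCLike.ofReal ∘ g : Fin n → ℂ))) i i = (g i : ℂ) := by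
      simp [Matrix.diagonal_apply_eq]
    have h2 : Wᴴ * S * W = ∑ i', Wᴴ * ((X i')ᴴ * A i' * X i') * W := by
      rw [hSdef, Matrix.mul_sum, Matrix.sum_mul]
    have h3 : ((Wᴴ * S * W) i i : ℂ) = ∑ i', ((∑ m, e i' m * q i' m i : ℝ) : ℂ) := by
      rw [h2]
      rw [Matrix.sum_apply]
      exact Finset.sum_congr rfl fun i' _ => by
        rw [hconj1 i']; exact entry_conj_diag (C i') (e i') i
    rw [hWS, h1] at h3
    rw [← Complex.ofReal_sum] at h3
    exact_mod_cast h3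
  -- constraint from hle
  have hcon : ∀ i, ∑ i', α i' * (∑ m, q i' m i) ≤ 1 := by
    intro i
    have hP : (Wᴴ * ((1 : Matrix (Fin n) (Fin n) ℂ)
        - ∑ i', α i' • ((X i')ᴴ * X i')) * W).PosSemidef :=
      hle.conjTranspose_mul_mul_same W
    have hWW : Wᴴ * W = 1 := by
      rw [hWdef, ← Matrix.star_eq_conjTranspose]
      exact Unitary.star_mul_self_of_mem hS.eigenvectorUnitary.2
    have hGW : ∀ i', Wᴴ * (α i' • ((X i')ᴴ * X i')) * W
        = α i' • ((C i')ᴴ * Matrix.diagonal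
            ((RCLike.ofReal ∘ (fun _ => (1:ℝ)) : Fin n → ℂ)) * (C i')) := by
      intro i'
      rw [Matrix.mul_smul, Matrix.smul_mul, hconj3 i']
    have hent : (Wᴴ * ((1 : Matrix (Fin n) (Fin n) ℂ)
        - ∑ i', α i' • ((X i')ᴴ * X i')) * W) i i
        = 1 - ((∑ i', α i' * ∑ m, q i' m i : ℝ) : ℂ) := by
      rw [Matrix.mul_sub, Matrix.sub_mul, Matrix.mul_one, hWW, Matrix.sub_apply,
        Matrix.one_apply_eq]
      congr 1
      rw [Matrix.mul_sum, Matrix.sum_mul, Matrix.sum_apply, Complex.ofReal_sum]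
      refine Finset.sum_congr rfl fun i' _ => ?_
      rw [hGW i', Matrix.smul_apply, entry_conj_diag (C i') (fun _ => (1:ℝ)) i]
      simp only [one_mul]
      rw [Complex.real_smul, ← Complex.ofReal_mul]
    have h0 := hP.re_dotProduct_nonneg (Pi.single i 1)
    have hdot : dotProduct (star (Pi.single i 1))
        ((Wᴴ * ((1 : Matrix (Fin n) (Fin n) ℂ)
          - ∑ i', α i' • ((X i')ᴴ * X i')) * W) *ᵥ Pi.single i 1)
        = (Wᴴ * ((1 : Matrix (Fin n) (Fin n) ℂ)
          - ∑ i', α i' • ((X i')ᴴ * X i')) * W) i i := by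
      rw [Matrix.mulVec_single]
      simp [dotProduct, Pi.single_apply]
    rw [hdot, hent] at h0
    simpa using h0
  -- the key scalar inequality
  set ρ : Fin n → ℝ := fun i => ∑ i', (α i' * f (α i')⁻¹) * (∑ m, f (e i' m) * q i' m i)
    with hρdef
  have hWRW : ∀ i, (Wᴴ * R * W) i i = ((ρ i : ℝ) : ℂ) := by
    intro i
    rw [hR, Matrix.mul_sum, Matrix.sum_mul, Matrix.sum_apply]
    simp only [hρdef]
    rw [Complex.ofReal_sum]
    refine Finset.sum_congr rfl fun i' _ => ?_
    rw [Matrix.mul_smul, Matrix.smul_mul, Matrix.smul_apply, hconj2 i',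
      entry_conj_diag (C i') (fun m => f (e i' m)) i]
    rw [Complex.real_smul, ← Complex.ofReal_mul]
  have hscalar : ∀ i, f (g i) ≤ ρ i := by
    intro i
    have hq0 : ∀ (i' : Fin ℓ) (m : Fin n), 0 ≤ q i' m i := by
      intro i' m; rw [hqdef]; exact Complex.normSq_nonneg _
    have hw : ∀ p : Fin ℓ × Fin n, 0 ≤ α p.1 * q p.1 p.2 i :=
      fun p => mul_nonneg (hα p.1).le (hq0 p.1 p.2)
    have hw1 : ∑ p : Fin ℓ × Fin n, α p.1 * q p.1 p.2 i ≤ 1 := by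
      rw [Fintype.sum_prod_type]
      simp_rw [← Finset.mul_sum]
      exact hcon i
    have hJ := jensen_sub f hconv hf0 Finset.univ
      (fun p : Fin ℓ × Fin n => α p.1 * q p.1 p.2 i)
      (fun p => (α p.1)⁻¹ * e p.1 p.2) (fun p _ => hw p) hw1
    have hxsum : ∑ p : Fin ℓ × Fin n,
        (α p.1 * q p.1 p.2 i) * ((α p.1)⁻¹ * e p.1 p.2) = g i := by
      rw [hgq i, Fintype.sum_prod_type]
      refine Finset.sum_congr rfl fun i' _ => Finset.sum_congr rfl fun m _ => ?_
      have hne : α i' ≠ 0 := (hα i').ne'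
      field_simp
    rw [hxsum] at hJ
    refine hJ.trans ?_
    have step2 : ∑ p : Fin ℓ × Fin n, (α p.1 * q p.1 p.2 i) * f ((α p.1)⁻¹ * e p.1 p.2)
        ≤ ∑ p : Fin ℓ × Fin n, (α p.1 * q p.1 p.2 i) * (f (α p.1)⁻¹ * f (e p.1 p.2)) :=
      Finset.sum_le_sum fun p _ => mul_le_mul_of_nonneg_left (hfmul _ _) (hw p)
    refine step2.trans (le_of_eq ?_)
    simp only [hρdef]
    rw [Fintype.sum_prod_type]
    refine Finset.sum_congr rfl fun i' _ => ?_
    rw [Finset.mul_sum]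
    exact Finset.sum_congr rfl fun m _ => by ring
  -- L-side: express partial sum of μ
  set U : Matrix (Fin n) (Fin n) ℂ := (hLh.eigenvectorUnitary : Matrix (Fin n) (Fin n) ℂ)
    with hUdef
  set eL : Fin n → ℝ := hLh.eigenvalues with heLdef
  set M : Matrix (Fin n) (Fin n) ℂ := Uᴴ * W with hMdef
  have hMmem : M ∈ Matrix.unitaryGroup (Fin n) ℂ := by
    rw [hMdef, hUdef, hWdef, ← Matrix.star_eq_conjTranspose]
    exact mul_mem (Unitary.star_mem hLh.eigenvectorUnitary.2) hS.eigenvectorUnitary.2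
  have hLdecomp : L = W * Matrix.diagonal
      ((RCLike.ofReal ∘ (fun i => f (g i)) : Fin n → ℂ)) * Wᴴ := by
    rw [hL, hS.cfc_eq]
    rfl
  have hUL : Uᴴ * L * U = Matrix.diagonal ((RCLike.ofReal ∘ eL : Fin n → ℂ)) := by
    rw [hUdef, heLdef, ← Matrix.star_eq_conjTranspose]
    rw [← hLh.conjStarAlgAut_star_eigenvectorUnitary, Unitary.conjStarAlgAut_apply]; simp
  have hULM : Uᴴ * L * U = (Mᴴ)ᴴ * Matrix.diagonal
      ((RCLike.ofReal ∘ (fun i => f (g i)) : Fin n → ℂ)) * Mᴴ := by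
    rw [hLdecomp, Matrix.conjTranspose_conjTranspose, hMdef, Matrix.conjTranspose_mul,
      Matrix.conjTranspose_conjTranspose]
    simp only [Matrix.mul_assoc]
  have heLformula : ∀ t, eL t = ∑ i, f (g i) * Complex.normSq (M t i) := by
    intro t
    have h1 := entry_conj_diag (Mᴴ) (fun i => f (g i)) t
    rw [← hULM, hUL] at h1
    have h2 : (Matrix.diagonal ((RCLike.ofReal ∘ eL : Fin n → ℂ))) t t = (eL t : ℂ) := by
      simp
    rw [h2] at h1
    have h3 : ∑ i, f (g i) * Complex.normSq (Mᴴ i t)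
        = ∑ i, f (g i) * Complex.normSq (M t i) := by
      refine Finset.sum_congr rfl fun i _ => ?_
      rw [Matrix.conjTranspose_apply, Complex.star_def, Complex.normSq_conj]
    rw [h3] at h1
    exact_mod_cast h1
  set F := Finset.univ.filter (fun j : Fin n => (j : ℕ) < k) with hFdef
  set T' := F.image σL with hTdef
  have hTcard : T'.card = k := by
    rw [hTdef, Finset.card_image_of_injective _ σL.injective, hFdef, card_filt hkn]
  have hsumμ : ∑ j ∈ F, μ j = ∑ t ∈ T', eL t := by
    rw [hTdef, Finset.sum_image (fun a _ b _ h => σL.injective h), hσL]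
    rfl
  set d : Fin n → ℝ := fun i => ∑ t ∈ T', Complex.normSq (M t i) with hddef
  have hd0 : ∀ i, 0 ≤ d i := fun i =>
    Finset.sum_nonneg fun t _ => Complex.normSq_nonneg _
  have hd1 : ∀ i, d i ≤ 1 := by
    intro i
    simp only [hddef]
    calc ∑ t ∈ T', Complex.normSq (M t i)
        ≤ ∑ t, Complex.normSq (M t i) :=
          Finset.sum_le_sum_of_subset_of_nonneg (Finset.subset_univ _)
            (fun t _ _ => Complex.normSq_nonneg _)
      _ = 1 := col_norm M hMmem i
  have hdsum : ∑ i, d i = (k : ℝ) := by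
    simp only [hddef]
    rw [Finset.sum_comm]
    rw [Finset.sum_congr rfl fun t _ => row_norm M hMmem t]
    simp [hTcard]
  have htrace : ∑ t ∈ T', eL t = ∑ i, f (g i) * d i := by
    calc ∑ t ∈ T', eL t = ∑ t ∈ T', ∑ i, f (g i) * Complex.normSq (M t i) :=
          Finset.sum_congr rfl fun t _ => heLformula t
      _ = ∑ i, ∑ t ∈ T', f (g i) * Complex.normSq (M t i) := Finset.sum_comm
      _ = ∑ i, f (g i) * d i := by
          refine Finset.sum_congr rfl fun i _ => ?_
          rw [hddef, Finset.mul_sum]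
  -- R-side
  set Vr : Matrix (Fin n) (Fin n) ℂ := (hRh.eigenvectorUnitary : Matrix (Fin n) (Fin n) ℂ)
    with hVrdef
  set eR : Fin n → ℝ := hRh.eigenvalues with heRdef
  set N : Matrix (Fin n) (Fin n) ℂ := Vrᴴ * W with hNdef
  have hNmem : N ∈ Matrix.unitaryGroup (Fin n) ℂ := by
    rw [hNdef, hVrdef, hWdef, ← Matrix.star_eq_conjTranspose]
    exact mul_mem (Unitary.star_mem hRh.eigenvectorUnitary.2) hS.eigenvectorUnitary.2
  have hWRW2 : ∀ i, (Wᴴ * R * W) i i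
      = ((∑ m, eR m * Complex.normSq (N m i) : ℝ) : ℂ) := by
    intro i
    have hh : Wᴴ * R * W = Nᴴ * Matrix.diagonal ((RCLike.ofReal ∘ eR : Fin n → ℂ)) * N := by
      conv_lhs => rw [hRh.spectral_theorem, Unitary.conjStarAlgAut_apply]
      rw [hNdef, hVrdef, heRdef]
      simp only [Matrix.star_eq_conjTranspose, Matrix.conjTranspose_mul,
        Matrix.conjTranspose_conjTranspose, Matrix.mul_assoc]
    rw [hh]
    exact entry_conj_diag N eR i
  have hρ2 : ∀ i, ρ i = ∑ m, eR m * Complex.normSq (N m i) := by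
    intro i
    have := (hWRW i).symm.trans (hWRW2 i)
    exact_mod_cast this
  set c : Fin n → ℝ := fun m => ∑ i, d i * Complex.normSq (N m i) with hcdef
  have hc0 : ∀ m, 0 ≤ c m := fun m =>
    Finset.sum_nonneg fun i _ => mul_nonneg (hd0 i) (Complex.normSq_nonneg _)
  have hc1 : ∀ m, c m ≤ 1 := by
    intro m
    simp only [hcdef]
    calc ∑ i, d i * Complex.normSq (N m i) ≤ ∑ i, Complex.normSq (N m i) :=
          Finset.sum_le_sum fun i _ =>
            mul_le_of_le_one_left (Complex.normSq_nonneg _) (hd1 i)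
      _ = 1 := row_norm N hNmem m
  have hcsum : ∑ m, c m = (k : ℝ) := by
    simp only [hcdef]
    rw [Finset.sum_comm]
    calc ∑ i, ∑ m, d i * Complex.normSq (N m i)
        = ∑ i, d i * ∑ m, Complex.normSq (N m i) := by
          refine Finset.sum_congr rfl fun i _ => ?_
          rw [Finset.mul_sum]
      _ = ∑ i, d i := by
          refine Finset.sum_congr rfl fun i _ => ?_
          rw [col_norm N hNmem i, mul_one]
      _ = (k : ℝ) := hdsum
  -- assemble
  calc ∑ j ∈ F, μ j = ∑ t ∈ T', eL t := hsumμ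
    _ = ∑ i, f (g i) * d i := htrace
    _ ≤ ∑ i, ρ i * d i :=
        Finset.sum_le_sum fun i _ => mul_le_mul_of_nonneg_right (hscalar i) (hd0 i)
    _ = ∑ m, eR m * c m := by
        calc ∑ i, ρ i * d i
            = ∑ i, ∑ m, eR m * Complex.normSq (N m i) * d i := by
              refine Finset.sum_congr rfl fun i _ => ?_
              rw [hρ2 i, Finset.sum_mul]
          _ = ∑ m, ∑ i, eR m * Complex.normSq (N m i) * d i := Finset.sum_comm
          _ = ∑ m, eR m * c m := by
              refine Finset.sum_congr rfl fun m _ => ?_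
              rw [hcdef, Finset.mul_sum]
              exact Finset.sum_congr rfl fun i _ => by ring
    _ = ∑ j, ν j * c (σR j) := by
        rw [hσR]
        exact (Equiv.sum_comp σR (fun m => eR m * c m)).symm
    _ ≤ ∑ j ∈ F, ν j := by
        refine top_sum ν hνa k hk1 hkn (fun j => c (σR j)) (fun j => hc0 _)
          (fun j => hc1 _) ?_
        rw [Equiv.sum_comp σR c]
        exact hcsum
end

section
/- Let r > 1, p_1, ..., p_ℓ > 0, let A_1, ..., A_ℓ be n×n Hermitian matrices and X_1, ..., X_ℓ be n×n complex matrices with 0 < ∑_{i=1}^ℓ p_i^{1/(1-r)} X_i* X_i ≤ (∑_{i=1}^ℓ p_i^{1/(1-r)}) I_n. Then for 1 ≤ k ≤ n, ∑_{j=1}^k λ_j(|∑_{i=1}^ℓ X_i* A_i X_i|^r) ≤ (∑_{i=1}^ℓ p_i^{1/(1-r)})^{r-1} ∑_{j=1}^k λ_j(∑_{i=1}^ℓ p_i X_i* |A_i|^r X_i). -/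
open Matrix ComplexOrder Finset

namespace VKaux

variable {n : ℕ}

lemma conj_mul' (z : ℂ) : (starRingEnd ℂ) z * z = (Complex.normSq z : ℂ) := by
  rw [mul_comm, Complex.mul_conj]

/-- entry of a conjugated real diagonal matrix -/
lemma diag_conj (B : Matrix (Fin n) (Fin n) ℂ) (d : Fin n → ℝ) (m : Fin n) :
    (star B * Matrix.diagonal (fun p => ((d p : ℝ) : ℂ)) * B) m m
      = ((∑ p, d p * Complex.normSq (B p m) : ℝ) : ℂ) := by
  rw [Matrix.mul_assoc, Matrix.mul_apply]
  push_cast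
  refine Finset.sum_congr rfl fun p _ => ?_
  rw [Matrix.diagonal_mul, Matrix.star_apply]
  have : star (B p m) = (starRingEnd ℂ) (B p m) := rfl
  rw [this]
  rw [show (starRingEnd ℂ) (B p m) * ((d p : ℂ) * B p m)
      = (d p : ℂ) * ((starRingEnd ℂ) (B p m) * B p m) by ring, conj_mul' (B p m)]

lemma star_mul_self_entry (C : Matrix (Fin n) (Fin n) ℂ) (m : Fin n) :
    (star C * C) m m = ((∑ p, Complex.normSq (C p m) : ℝ) : ℂ) := by
  rw [Matrix.mul_apply]
  push_cast
  refine Finset.sum_congr rfl fun p _ => ?_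
  rw [Matrix.star_apply]
  have : star (C p m) = (starRingEnd ℂ) (C p m) := rfl
  rw [this, conj_mul' (C p m)]

lemma mul_star_self_entry (C : Matrix (Fin n) (Fin n) ℂ) (p : Fin n) :
    (C * star C) p p = ((∑ m, Complex.normSq (C p m) : ℝ) : ℂ) := by
  rw [Matrix.mul_apply]
  push_cast
  refine Finset.sum_congr rfl fun m _ => ?_
  rw [Matrix.star_apply]
  have : star (C p m) = (starRingEnd ℂ) (C p m) := rfl
  rw [this, Complex.mul_conj]

/-- quadratic form as a conjugated entry -/
lemma entry_qf (M V : Matrix (Fin n) (Fin n) ℂ) (p : Fin n) :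
    (star V * M * V) p p
      = dotProduct (star fun q => V q p) (M *ᵥ fun q => V q p) := by
  rw [Matrix.mul_assoc, Matrix.mul_apply]
  simp only [dotProduct, Matrix.mulVec, Matrix.star_apply, Pi.star_apply,
    Matrix.mul_apply, dotProduct]

lemma card_filter_lt {n k : ℕ} (hkn : k ≤ n) :
    (Finset.univ.filter (fun j : Fin n => (j : ℕ) < k)).card = k := by
  rw [show Finset.univ.filter (fun j : Fin n => (j : ℕ) < k)
      = Finset.map (Fin.castLEEmb hkn) Finset.univ from ?_]
  · simp
  · ext j
    simp only [Finset.mem_filter, Finset.mem_univ, true_and, Finset.mem_map,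
      Fin.castLEEmb_apply]
    constructor
    · intro hj; exact ⟨⟨(j : ℕ), hj⟩, by simp [Fin.ext_iff]⟩
    · rintro ⟨i, rfl⟩; simp

lemma abel {n k : ℕ} (hk1 : 1 ≤ k) (hkn : k ≤ n) (ν : Fin n → ℝ) (hν : Antitone ν)
    (s : Fin n → ℝ) (h0 : ∀ q, 0 ≤ s q) (h1 : ∀ q, s q ≤ 1)
    (hs : ∑ q, s q = k) :
    ∑ q, ν q * s q ≤ ∑ j ∈ Finset.univ.filter (fun j : Fin n => (j : ℕ) < k), ν j := by
  classical
  set K := Finset.univ.filter (fun j : Fin n => (j : ℕ) < k) with hKdef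
  have hkd : k - 1 < n := by omega
  set β := ν ⟨k - 1, hkd⟩ with hβ
  have key : ∀ q : Fin n,
      ν q * s q ≤ (if q ∈ K then ν q else 0) + β * (s q - if q ∈ K then 1 else 0) := by
    intro q
    by_cases hq : q ∈ K
    · have hq' : (q : ℕ) < k := by simpa [hKdef] using hq
      have hνq : β ≤ ν q := hν (by simp only [Fin.le_def]; omega)
      simp only [hq, if_pos]
      nlinarith [h1 q, h0 q]
    · have hq' : ¬ (q : ℕ) < k := by simpa [hKdef] using hq
      have hνq : ν q ≤ β := hν (by simp only [Fin.le_def]; omega)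
      simp only [hq, if_neg, not_false_iff]
      nlinarith [h0 q]
  have hcard : ((K.card : ℕ) : ℝ) = (k : ℝ) := by rw [card_filter_lt hkn]
  calc ∑ q, ν q * s q
      ≤ ∑ q, ((if q ∈ K then ν q else 0) + β * (s q - if q ∈ K then 1 else 0)) :=
        Finset.sum_le_sum fun q _ => key q
    _ = (∑ q ∈ K, ν q) + β * ((∑ q, s q) - K.card) := by
        rw [Finset.sum_add_distrib]
        congr 1
        · rw [Finset.sum_ite_mem, Finset.univ_inter]
        · rw [← Finset.mul_sum]
          congr 1
          rw [Finset.sum_sub_distrib]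
          congr 1
          rw [Finset.sum_ite_mem, Finset.univ_inter, Finset.sum_const, nsmul_eq_mul, mul_one]
    _ = ∑ q ∈ K, ν q := by rw [hs, hcard]; ring

lemma holder_pt {N : ℕ} {r : ℝ} (hr : 1 < r) (α w : Fin N → ℝ) (hw : ∀ q, 0 ≤ w q) :
    |∑ q, α q * w q| ≤ (∑ q, |α q| ^ r * w q) ^ (1/r) * (∑ q, w q) ^ (1 - 1/r) := by
  have hr0 : (0:ℝ) < r := by linarith
  have hpq : Real.HolderConjugate r (r / (r - 1)) := Real.HolderConjugate.conjExponent hr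
  have h1q : 1 / (r / (r - 1)) = 1 - 1/r := by field_simp
  have hexp1 : ∀ q, |(|α q| * (w q) ^ (1/r))| ^ r = |α q| ^ r * w q := by
    intro q
    rw [abs_of_nonneg (mul_nonneg (abs_nonneg _) (Real.rpow_nonneg (hw q) _)),
      Real.mul_rpow (abs_nonneg _) (Real.rpow_nonneg (hw q) _),
      ← Real.rpow_mul (hw q), one_div_mul_cancel (ne_of_gt hr0), Real.rpow_one]
  have hexp2 : ∀ q, |(w q) ^ (1 - 1/r)| ^ (r / (r-1)) = w q := by
    intro q
    rw [abs_of_nonneg (Real.rpow_nonneg (hw q) _), ← Real.rpow_mul (hw q)]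
    have h1 : r - 1 ≠ 0 := by linarith
    rw [show (1 - 1/r) * (r / (r-1)) = 1 by field_simp, Real.rpow_one]
  have step1 : |∑ q, α q * w q| ≤ ∑ q, |α q| * w q := by
    refine (Finset.abs_sum_le_sum_abs _ _).trans ?_
    refine Finset.sum_le_sum fun q _ => ?_
    rw [abs_mul, abs_of_nonneg (hw q)]
  have step2 : ∑ q, |α q| * w q
      ≤ (∑ q, |(|α q| * (w q) ^ (1/r))| ^ r) ^ (1/r)
        * (∑ q, |(w q) ^ (1 - 1/r)| ^ (r / (r-1))) ^ (1 / (r / (r-1))) := by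
    have := Real.inner_le_Lp_mul_Lq Finset.univ
      (fun q => |α q| * (w q) ^ (1/r)) (fun q => (w q) ^ (1 - 1/r)) hpq
    refine le_trans (le_of_eq ?_) this
    refine Finset.sum_congr rfl fun q _ => ?_
    rw [mul_assoc, ← Real.rpow_add' (hw q) (by norm_num : (1/r) + (1 - 1/r) ≠ 0)]
    norm_num
  rw [h1q] at step2
  refine (step1.trans step2).trans (le_of_eq ?_)
  rw [Finset.sum_congr rfl fun q _ => hexp1 q, Finset.sum_congr rfl fun q _ => hexp2 q]

lemma scalarVK {ℓ : ℕ} {r : ℝ} (hr : 1 < r) (p : Fin ℓ → ℝ) (hp : ∀ i, 0 < p i)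
    (a b s : Fin ℓ → ℝ)
    (hab : ∀ i, |a i| ≤ (b i) ^ (1/r) * (s i) ^ (1 - 1/r))
    (hb : ∀ i, 0 ≤ b i) (hs : ∀ i, 0 ≤ s i)
    {c : ℝ} (hc : 0 < c) (hsc : ∑ i, p i ^ (1/(1-r)) * s i ≤ c) :
    |∑ i, a i| ^ r ≤ c ^ (r-1) * ∑ i, p i * b i := by
  have hr0 : (0:ℝ) < r := by linarith
  have hr1 : r - 1 ≠ 0 := by linarith
  have hr1' : 1 - r ≠ 0 := by linarith
  have hrne : r ≠ 0 := ne_of_gt hr0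
  have hpq : Real.HolderConjugate r (r / (r - 1)) := Real.HolderConjugate.conjExponent hr
  have h1q : 1 / (r / (r - 1)) = 1 - 1/r := by field_simp
  -- step 2 : rebalancing with weights
  have hrebal : ∀ i, (b i) ^ (1/r) * (s i) ^ (1 - 1/r)
      = (p i * b i) ^ (1/r) * ((p i ^ (1/(1-r))) * s i) ^ (1 - 1/r) := by
    intro i
    rw [Real.mul_rpow (le_of_lt (hp i)) (hb i),
      Real.mul_rpow (Real.rpow_nonneg (le_of_lt (hp i)) _) (hs i),
      ← Real.rpow_mul (le_of_lt (hp i)),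
      show (1/(1-r)) * (1 - 1/r) = -(1/r) by field_simp; ring]
    have : p i ^ (1/r) * (p i ^ (-(1/r))) = 1 := by
      rw [← Real.rpow_add (hp i)]; simp
    calc (b i) ^ (1/r) * (s i) ^ (1 - 1/r)
        = (p i ^ (1/r) * (p i ^ (-(1/r)))) * ((b i) ^ (1/r) * (s i) ^ (1 - 1/r)) := by
          rw [this, one_mul]
      _ = p i ^ (1/r) * (b i) ^ (1/r) * (p i ^ (-(1/r)) * (s i) ^ (1 - 1/r)) := by ring
  have habs : ∀ i, 0 ≤ p i * b i := fun i => mul_nonneg (le_of_lt (hp i)) (hb i)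
  have habs' : ∀ i, 0 ≤ p i ^ (1/(1-r)) * s i :=
    fun i => mul_nonneg (Real.rpow_nonneg (le_of_lt (hp i)) _) (hs i)
  -- Hölder
  have holder : ∑ i, (p i * b i) ^ (1/r) * ((p i ^ (1/(1-r))) * s i) ^ (1 - 1/r)
      ≤ (∑ i, p i * b i) ^ (1/r) * (∑ i, p i ^ (1/(1-r)) * s i) ^ (1 - 1/r) := by
    have := Real.inner_le_Lp_mul_Lq Finset.univ
      (fun i => (p i * b i) ^ (1/r)) (fun i => ((p i ^ (1/(1-r))) * s i) ^ (1 - 1/r)) hpq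
    rw [h1q] at this
    refine this.trans (le_of_eq ?_)
    congr 1
    · congr 1
      refine Finset.sum_congr rfl fun i _ => ?_
      rw [abs_of_nonneg (Real.rpow_nonneg (habs i) _), ← Real.rpow_mul (habs i),
        one_div_mul_cancel hrne, Real.rpow_one]
    · congr 1
      refine Finset.sum_congr rfl fun i _ => ?_
      rw [abs_of_nonneg (Real.rpow_nonneg (habs' i) _), ← Real.rpow_mul (habs' i),
        show (1 - 1/r) * (r / (r-1)) = 1 by field_simp, Real.rpow_one]
  have hmain : |∑ i, a i| ≤ (∑ i, p i * b i) ^ (1/r) * c ^ (1 - 1/r) := by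
    calc |∑ i, a i| ≤ ∑ i, |a i| := Finset.abs_sum_le_sum_abs _ _
      _ ≤ ∑ i, (b i) ^ (1/r) * (s i) ^ (1 - 1/r) := Finset.sum_le_sum fun i _ => hab i
      _ = ∑ i, (p i * b i) ^ (1/r) * ((p i ^ (1/(1-r))) * s i) ^ (1 - 1/r) :=
          Finset.sum_congr rfl fun i _ => hrebal i
      _ ≤ (∑ i, p i * b i) ^ (1/r) * (∑ i, p i ^ (1/(1-r)) * s i) ^ (1 - 1/r) := holder
      _ ≤ (∑ i, p i * b i) ^ (1/r) * c ^ (1 - 1/r) := by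
          refine mul_le_mul_of_nonneg_left ?_ (Real.rpow_nonneg (Finset.sum_nonneg
            fun i _ => habs i) _)
          exact Real.rpow_le_rpow (Finset.sum_nonneg fun i _ => habs' i) hsc
            (by rw [sub_nonneg, div_le_one hr0]; linarith)
  have hsum_nonneg : 0 ≤ ∑ i, p i * b i := Finset.sum_nonneg fun i _ => habs i
  calc |∑ i, a i| ^ r ≤ ((∑ i, p i * b i) ^ (1/r) * c ^ (1 - 1/r)) ^ r :=
        Real.rpow_le_rpow (abs_nonneg _) hmain (le_of_lt hr0)
    _ = (∑ i, p i * b i) * c ^ (r - 1) := by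
        rw [Real.mul_rpow (Real.rpow_nonneg hsum_nonneg _)
            (Real.rpow_nonneg (le_of_lt hc) _),
          ← Real.rpow_mul hsum_nonneg, one_div_mul_cancel hrne, Real.rpow_one,
          ← Real.rpow_mul (le_of_lt hc),
          show (1 - 1/r) * r = r - 1 by field_simp]
    _ = c ^ (r-1) * ∑ i, p i * b i := by ring

end VKaux

set_option maxHeartbeats 1600000 in
open VKaux in
open Matrix ComplexOrder in
theorem eigenvalue_vasic_keckic (n ℓ : ℕ) (r : ℝ) (hr : 1 < r)
    (p : Fin ℓ → ℝ) (hp : ∀ i, 0 < p i)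
    (A : Fin ℓ → Matrix (Fin n) (Fin n) ℂ) (hA : ∀ i, (A i).IsHermitian)
    (X : Fin ℓ → Matrix (Fin n) (Fin n) ℂ)
    (hpos : (∑ i, p i ^ (1 / (1 - r)) • ((X i)ᴴ * X i)).PosDef)
    (hle : ((∑ i, p i ^ (1 / (1 - r))) • (1 : Matrix (Fin n) (Fin n) ℂ)
        - ∑ i, p i ^ (1 / (1 - r)) • ((X i)ᴴ * X i)).PosSemidef)
    (L R : Matrix (Fin n) (Fin n) ℂ)
    (hL : L = cfc (fun t : ℝ => |t| ^ r) (∑ i, (X i)ᴴ * A i * X i))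
    (hR : R = ∑ i, p i • ((X i)ᴴ * cfc (fun t : ℝ => |t| ^ r) (A i) * X i))
    (hLh : L.IsHermitian) (hRh : R.IsHermitian)
    (μ ν : Fin n → ℝ) (hμa : Antitone μ) (hνa : Antitone ν)
    (hμ : ∃ σ : Equiv.Perm (Fin n), μ = hLh.eigenvalues ∘ σ)
    (hν : ∃ σ : Equiv.Perm (Fin n), ν = hRh.eigenvalues ∘ σ)
    (k : ℕ) (hk1 : 1 ≤ k) (hkn : k ≤ n) :
    ∑ j ∈ Finset.univ.filter (fun j : Fin n => (j : ℕ) < k), μ j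
      ≤ (∑ i, p i ^ (1 / (1 - r))) ^ (r - 1)
          * ∑ j ∈ Finset.univ.filter (fun j : Fin n => (j : ℕ) < k), ν j := by
  classical
  rcases Nat.eq_zero_or_pos n with hn0 | hn
  · subst hn0
    simp
  rcases Nat.eq_zero_or_pos ℓ with hl0 | hl
  · subst hl0
    exfalso
    have h0 : (∑ i : Fin 0, p i ^ (1 / (1 - r)) • ((X i)ᴴ * X i)) = 0 := by simp
    rw [h0] at hpos
    have hdet := hpos.det_pos
    haveI : Nonempty (Fin n) := ⟨⟨0, hn⟩⟩
    rw [Matrix.det_zero] at hdet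
    exact lt_irrefl 0 hdet
  set f : ℝ → ℝ := fun t => |t| ^ r with hf
  set c : ℝ := ∑ i, p i ^ (1 / (1 - r)) with hcdef
  have hc : 0 < c := Finset.sum_pos
    (fun i _ => Real.rpow_pos_of_pos (hp i) _) ⟨⟨0, hl⟩, Finset.mem_univ _⟩
  -- T and its spectral data
  set T : Matrix (Fin n) (Fin n) ℂ := ∑ i, (X i)ᴴ * A i * X i with hTdef
  have hT : T.IsHermitian := by
    rw [hTdef, Matrix.IsHermitian, Matrix.conjTranspose_sum]
    exact Finset.sum_congr rfl fun i _ =>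
      (Matrix.isHermitian_conjTranspose_mul_mul _ (hA i))
  set U : Matrix (Fin n) (Fin n) ℂ := (hT.eigenvectorUnitary : Matrix (Fin n) (Fin n) ℂ)
    with hUdef
  have hUU' : star U * U = 1 := (Matrix.mem_unitaryGroup_iff').mp hT.eigenvectorUnitary.2
  have hUU : U * star U = 1 := (Matrix.mem_unitaryGroup_iff).mp hT.eigenvectorUnitary.2
  set e : Fin n → ℝ := hT.eigenvalues with hedef
  have hdiagT : star U * T * U = Matrix.diagonal (fun q => ((e q : ℝ) : ℂ)) :=
    by have h := hT.conjStarAlgAut_star_eigenvectorUnitary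
       rw [Unitary.conjStarAlgAut_apply, Unitary.coe_star, star_star] at h
       exact h
  set W : Matrix (Fin n) (Fin n) ℂ := (hLh.eigenvectorUnitary : Matrix (Fin n) (Fin n) ℂ)
    with hWdef
  have hWW' : star W * W = 1 := (Matrix.mem_unitaryGroup_iff').mp hLh.eigenvectorUnitary.2
  have hWW : W * star W = 1 := (Matrix.mem_unitaryGroup_iff).mp hLh.eigenvectorUnitary.2
  set lamL : Fin n → ℝ := hLh.eigenvalues with hlamLdef
  set WR : Matrix (Fin n) (Fin n) ℂ := (hRh.eigenvectorUnitary : Matrix (Fin n) (Fin n) ℂ)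
    with hWRdef
  have hWRW' : star WR * WR = 1 := (Matrix.mem_unitaryGroup_iff').mp hRh.eigenvectorUnitary.2
  have hWRW : WR * star WR = 1 := (Matrix.mem_unitaryGroup_iff).mp hRh.eigenvectorUnitary.2
  set lamR : Fin n → ℝ := hRh.eigenvalues with hlamRdef
  -- the transition matrices
  set B : Matrix (Fin n) (Fin n) ℂ := star U * W with hBdef
  set Cmat : Matrix (Fin n) (Fin n) ℂ := star WR * U with hCmatdef
  have hBstar : star B = star W * U := by rw [hBdef, Matrix.star_mul, star_star]
  have hCstar : star Cmat = star U * WR := by rw [hCmatdef, Matrix.star_mul, star_star]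
  have hBB : B * star B = 1 := by
    rw [hBdef, hBstar]
    simp only [Matrix.mul_assoc]
    rw [← Matrix.mul_assoc W, hWW, Matrix.one_mul, hUU']
  have hBB' : star B * B = 1 := by
    rw [hBdef, hBstar]
    simp only [Matrix.mul_assoc]
    rw [← Matrix.mul_assoc U, hUU, Matrix.one_mul, hWW']
  have hCC : Cmat * star Cmat = 1 := by
    rw [hCmatdef, hCstar]
    simp only [Matrix.mul_assoc]
    rw [← Matrix.mul_assoc U, hUU, Matrix.one_mul, hWRW']
  have hCC' : star Cmat * Cmat = 1 := by
    rw [hCmatdef, hCstar]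
    simp only [Matrix.mul_assoc]
    rw [← Matrix.mul_assoc WR, hWRW, Matrix.one_mul, hUU']
  -- L in terms of the eigenbasis of T
  have hLU : L = U * Matrix.diagonal (fun q => ((f (e q) : ℝ) : ℂ)) * star U := by
    rw [hL, hT.cfc_eq]
    rfl
  have hlam : ∀ m, lamL m = ∑ q, f (e q) * Complex.normSq (B q m) := by
    intro m
    have h1 : star W * L * W
        = star B * Matrix.diagonal (fun q => ((f (e q) : ℝ) : ℂ)) * B := by
      rw [hLU, hBstar, hBdef]
      simp only [Matrix.mul_assoc]
    have h2 : star W * L * W = Matrix.diagonal (fun q => ((lamL q : ℝ) : ℂ)) :=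
      by have h := hLh.conjStarAlgAut_star_eigenvectorUnitary
         rw [Unitary.conjStarAlgAut_apply, Unitary.coe_star, star_star] at h
         exact h
    have h4 : ((lamL m : ℝ) : ℂ)
        = ((∑ q, f (e q) * Complex.normSq (B q m) : ℝ) : ℂ) := by
      rw [← Matrix.diagonal_apply_eq (fun q => ((lamL q : ℝ) : ℂ)) m, ← h2, h1,
        VKaux.diag_conj B (fun q => f (e q)) m]
    exact_mod_cast h4
  -- per-summand spectral data
  set Wa : Fin ℓ → Matrix (Fin n) (Fin n) ℂ :=
    fun i => ((hA i).eigenvectorUnitary : Matrix (Fin n) (Fin n) ℂ) with hWadef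
  set alf : Fin ℓ → Fin n → ℝ := fun i => (hA i).eigenvalues with halfdef
  set Ci : Fin ℓ → Matrix (Fin n) (Fin n) ℂ := fun i => star (Wa i) * (X i * U) with hCidef
  have hWaW : ∀ i, Wa i * star (Wa i) = 1 :=
    fun i => (Matrix.mem_unitaryGroup_iff).mp (hA i).eigenvectorUnitary.2
  have hCistar : ∀ i, star (Ci i) = (star U * (X i)ᴴ) * Wa i := by
    intro i
    rw [hCidef]
    simp only [Matrix.star_mul, star_star, Matrix.star_eq_conjTranspose (X i)]
  have hconj : ∀ (i : Fin ℓ) (d : Fin n → ℝ),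
      star U * ((X i)ᴴ * (Wa i * Matrix.diagonal (fun q => ((d q : ℝ) : ℂ))
          * star (Wa i)) * X i) * U
        = star (Ci i) * Matrix.diagonal (fun q => ((d q : ℝ) : ℂ)) * (Ci i) := by
    intro i d
    rw [hCistar i, hCidef]
    simp only [Matrix.mul_assoc]
  have hXU : ∀ i, star U * ((X i)ᴴ * X i) * U = star (Ci i) * (Ci i) := by
    intro i
    rw [hCistar i, hCidef]
    calc star U * ((X i)ᴴ * X i) * U
        = star U * (X i)ᴴ * (X i * U) := by simp only [Matrix.mul_assoc]
      _ = star U * (X i)ᴴ * ((Wa i * star (Wa i)) * (X i * U)) := by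
          rw [hWaW i, Matrix.one_mul]
      _ = star U * (X i)ᴴ * Wa i * (star (Wa i) * (X i * U)) := by
          simp only [Matrix.mul_assoc]
  -- diagonal entries of conjugated T
  have hTentry : ∀ pp, e pp = ∑ i, ∑ q, alf i q * Complex.normSq (Ci i q pp) := by
    intro pp
    have h1 : star U * T * U
        = ∑ i, star (Ci i) * Matrix.diagonal (fun q => ((alf i q : ℝ) : ℂ)) * (Ci i) := by
      rw [hTdef, Matrix.mul_sum, Matrix.sum_mul]
      refine Finset.sum_congr rfl fun i _ => ?_
      have hsp : A i = Wa i * Matrix.diagonal (fun q => ((alf i q : ℝ) : ℂ)) * star (Wa i) :=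
        (hA i).spectral_theorem
      rw [hsp]
      exact hconj i (alf i)
    have h2 : ((Matrix.diagonal (fun q => ((e q : ℝ) : ℂ))) pp pp).re
        = ∑ i, ∑ q, alf i q * Complex.normSq (Ci i q pp) := by
      rw [← hdiagT, h1, Matrix.sum_apply, Complex.re_sum]
      refine Finset.sum_congr rfl fun i _ => ?_
      rw [VKaux.diag_conj (Ci i) (alf i) pp, Complex.ofReal_re]
    rw [← h2, Matrix.diagonal_apply_eq, Complex.ofReal_re]
  -- diagonal entries of conjugated R
  have hcfcA : ∀ i, cfc f (A i)
      = Wa i * Matrix.diagonal (fun q => ((f (alf i q) : ℝ) : ℂ)) * star (Wa i) := by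
    intro i
    rw [(hA i).cfc_eq]
    rfl
  have hRentry : ∀ pp, ((star U * R * U) pp pp).re
      = ∑ i, p i * ∑ q, f (alf i q) * Complex.normSq (Ci i q pp) := by
    intro pp
    have h1 : star U * R * U
        = ∑ i, p i • (star (Ci i) * Matrix.diagonal (fun q => ((f (alf i q) : ℝ) : ℂ))
            * (Ci i)) := by
      rw [hR, Matrix.mul_sum, Matrix.sum_mul]
      refine Finset.sum_congr rfl fun i _ => ?_
      rw [Matrix.mul_smul, Matrix.smul_mul]
      congr 1
      rw [hcfcA i]
      exact hconj i (fun q => f (alf i q))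
    rw [h1, Matrix.sum_apply, Complex.re_sum]
    refine Finset.sum_congr rfl fun i _ => ?_
    rw [Matrix.smul_apply, Complex.smul_re, VKaux.diag_conj (Ci i) (fun q => f (alf i q)) pp,
      Complex.ofReal_re, smul_eq_mul]
  -- the norm constraint from hle
  have hs_le : ∀ pp, ∑ i, p i ^ (1 / (1 - r)) * (∑ q, Complex.normSq (Ci i q pp)) ≤ c := by
    intro pp
    have hx := hle.dotProduct_mulVec_nonneg (fun q => U q pp)
    have heq : (star U * ((c • (1 : Matrix (Fin n) (Fin n) ℂ))
          - ∑ i, p i ^ (1 / (1 - r)) • ((X i)ᴴ * X i)) * U) pp pp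
        = dotProduct (star fun q => U q pp)
          (((c • (1 : Matrix (Fin n) (Fin n) ℂ))
            - ∑ i, p i ^ (1 / (1 - r)) • ((X i)ᴴ * X i)) *ᵥ (fun q => U q pp)) :=
      VKaux.entry_qf _ U pp
    have hre : 0 ≤ ((star U * ((c • (1 : Matrix (Fin n) (Fin n) ℂ))
          - ∑ i, p i ^ (1 / (1 - r)) • ((X i)ᴴ * X i)) * U) pp pp).re := by
      rw [heq]
      have := (Complex.le_def.mp hx).1
      simpa using this
    have hsplit : (star U * ((c • (1 : Matrix (Fin n) (Fin n) ℂ))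
          - ∑ i, p i ^ (1 / (1 - r)) • ((X i)ᴴ * X i)) * U) pp pp
        = (c : ℂ) - ∑ i, p i ^ (1 / (1 - r)) • ((star (Ci i) * Ci i) pp pp) := by
      rw [Matrix.mul_sub, Matrix.sub_mul, Matrix.sub_apply]
      congr 1
      · rw [Matrix.mul_smul, Matrix.smul_mul, Matrix.mul_one, hUU', Matrix.smul_apply,
          Matrix.one_apply_eq]
        simp
      · rw [Matrix.mul_sum, Matrix.sum_mul, Matrix.sum_apply]
        refine Finset.sum_congr rfl fun i _ => ?_
        rw [Matrix.mul_smul, Matrix.smul_mul, Matrix.smul_apply, hXU i]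
    rw [hsplit] at hre
    have hre2 : 0 ≤ c - ∑ i, p i ^ (1 / (1 - r)) * (∑ q, Complex.normSq (Ci i q pp)) := by
      have : ((c : ℂ) - ∑ i, p i ^ (1 / (1 - r)) • ((star (Ci i) * Ci i) pp pp)).re
          = c - ∑ i, p i ^ (1 / (1 - r)) * (∑ q, Complex.normSq (Ci i q pp)) := by
        rw [Complex.sub_re, Complex.ofReal_re, Complex.re_sum]
        congr 1
        refine Finset.sum_congr rfl fun i _ => ?_
        rw [Complex.smul_re, VKaux.star_mul_self_entry (Ci i) pp, Complex.ofReal_re,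
          smul_eq_mul]
      rwa [this] at hre
    linarith
  -- the pointwise scalar Vasic-Keckic inequality
  have hkey : ∀ pp, f (e pp) ≤ c ^ (r - 1) * ((star U * R * U) pp pp).re := by
    intro pp
    have h := VKaux.scalarVK hr p hp
      (fun i => ∑ q, alf i q * Complex.normSq (Ci i q pp))
      (fun i => ∑ q, |alf i q| ^ r * Complex.normSq (Ci i q pp))
      (fun i => ∑ q, Complex.normSq (Ci i q pp))
      (fun i => VKaux.holder_pt hr (alf i) (fun q => Complex.normSq (Ci i q pp))
        (fun q => Complex.normSq_nonneg _))
      (fun i => Finset.sum_nonneg fun q _ => mul_nonneg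
        (Real.rpow_nonneg (abs_nonneg _) _) (Complex.normSq_nonneg _))
      (fun i => Finset.sum_nonneg fun q _ => Complex.normSq_nonneg _)
      hc (hs_le pp)
    rw [hRentry pp]
    calc f (e pp) = |∑ i, ∑ q, alf i q * Complex.normSq (Ci i q pp)| ^ r := by
          rw [← hTentry pp]
      _ ≤ c ^ (r - 1) * ∑ i, p i * ∑ q, |alf i q| ^ r * Complex.normSq (Ci i q pp) := h
      _ = c ^ (r - 1) * ∑ i, p i * ∑ q, f (alf i q) * Complex.normSq (Ci i q pp) := rfl
  -- R in the eigenbasis of T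
  have hGnu : ∀ pp, ((star U * R * U) pp pp).re
      = ∑ q, lamR q * Complex.normSq (Cmat q pp) := by
    intro pp
    have h1 : star U * R * U
        = star Cmat * Matrix.diagonal (fun q => ((lamR q : ℝ) : ℂ)) * Cmat := by
      conv_lhs => rw [hRh.spectral_theorem]
      rw [hCstar, hCmatdef]
      simp only [Matrix.mul_assoc, Unitary.conjStarAlgAut_apply]
      rfl
    rw [h1, VKaux.diag_conj Cmat lamR pp, Complex.ofReal_re]
  -- row and column sums
  have hrowB : ∀ q, ∑ m, Complex.normSq (B q m) = 1 := by
    intro q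
    have h1 : ((1 : Matrix (Fin n) (Fin n) ℂ)) q q
        = ((∑ m, Complex.normSq (B q m) : ℝ) : ℂ) := by
      rw [← hBB]; exact VKaux.mul_star_self_entry B q
    rw [Matrix.one_apply_eq] at h1
    exact_mod_cast h1.symm
  have hcolB : ∀ m, ∑ q, Complex.normSq (B q m) = 1 := by
    intro m
    have h1 : ((1 : Matrix (Fin n) (Fin n) ℂ)) m m
        = ((∑ q, Complex.normSq (B q m) : ℝ) : ℂ) := by
      rw [← hBB']; exact VKaux.star_mul_self_entry B m
    rw [Matrix.one_apply_eq] at h1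
    exact_mod_cast h1.symm
  have hrowC : ∀ q, ∑ pp, Complex.normSq (Cmat q pp) = 1 := by
    intro q
    have h1 : ((1 : Matrix (Fin n) (Fin n) ℂ)) q q
        = ((∑ pp, Complex.normSq (Cmat q pp) : ℝ) : ℂ) := by
      rw [← hCC]; exact VKaux.mul_star_self_entry Cmat q
    rw [Matrix.one_apply_eq] at h1
    exact_mod_cast h1.symm
  have hcolC : ∀ pp, ∑ q, Complex.normSq (Cmat q pp) = 1 := by
    intro pp
    have h1 : ((1 : Matrix (Fin n) (Fin n) ℂ)) pp pp
        = ((∑ q, Complex.normSq (Cmat q pp) : ℝ) : ℂ) := by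
      rw [← hCC']; exact VKaux.star_mul_self_entry Cmat pp
    rw [Matrix.one_apply_eq] at h1
    exact_mod_cast h1.symm
  -- assembly
  obtain ⟨σ, hσ⟩ := hμ
  obtain ⟨τ, hτ⟩ := hν
  set K : Finset (Fin n) := Finset.univ.filter (fun j : Fin n => (j : ℕ) < k) with hKdef
  set S' : Finset (Fin n) := K.image σ with hS'def
  have hcardS' : S'.card = k := by
    rw [hS'def, Finset.card_image_of_injective _ σ.injective, hKdef,
      VKaux.card_filter_lt hkn]
  set t : Fin n → ℝ := fun pp => ∑ m ∈ S', Complex.normSq (B pp m) with htdef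
  have htnn : ∀ pp, 0 ≤ t pp :=
    fun pp => Finset.sum_nonneg fun m _ => Complex.normSq_nonneg _
  have htle : ∀ pp, t pp ≤ 1 := by
    intro pp
    rw [← hrowB pp]
    exact Finset.sum_le_sum_of_subset_of_nonneg (Finset.subset_univ _)
      (fun m _ _ => Complex.normSq_nonneg _)
  have htsum : ∑ pp, t pp = k := by
    rw [htdef]
    rw [Finset.sum_comm]
    rw [Finset.sum_congr rfl fun m _ => hcolB m]
    simp [hcardS']
  set sw : Fin n → ℝ := fun q => ∑ pp, t pp * Complex.normSq (Cmat q pp) with hswdef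
  have hswnn : ∀ q, 0 ≤ sw q :=
    fun q => Finset.sum_nonneg fun pp _ =>
      mul_nonneg (htnn pp) (Complex.normSq_nonneg _)
  have hswle : ∀ q, sw q ≤ 1 := by
    intro q
    rw [← hrowC q]
    exact Finset.sum_le_sum fun pp _ =>
      mul_le_of_le_one_left (Complex.normSq_nonneg _) (htle pp)
  have hswsum : ∑ q, sw q = k := by
    rw [hswdef, Finset.sum_comm]
    calc ∑ pp, ∑ q, t pp * Complex.normSq (Cmat q pp)
        = ∑ pp, t pp * ∑ q, Complex.normSq (Cmat q pp) := by
          exact Finset.sum_congr rfl fun pp _ => (Finset.mul_sum _ _ _).symm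
      _ = ∑ pp, t pp := by
          refine Finset.sum_congr rfl fun pp _ => ?_
          rw [hcolC pp, mul_one]
      _ = k := htsum
  have habel : ∑ q, lamR q * sw q ≤ ∑ j ∈ K, ν j := by
    have h1 : ∑ q, lamR q * sw q = ∑ q, ν q * sw (τ q) := by
      rw [← Equiv.sum_comp τ (fun q => lamR q * sw q)]
      refine Finset.sum_congr rfl fun q _ => ?_
      rw [hτ]
      rfl
    rw [h1]
    exact VKaux.abel hk1 hkn ν hνa (fun q => sw (τ q)) (fun q => hswnn _)
      (fun q => hswle _) (by rw [Equiv.sum_comp τ sw, hswsum])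
  have hchain : ∑ j ∈ K, μ j ≤ c ^ (r - 1) * ∑ j ∈ K, ν j := by
    calc ∑ j ∈ K, μ j = ∑ j ∈ K, lamL (σ j) := by
          refine Finset.sum_congr rfl fun j _ => ?_
          rw [hσ]
          rfl
      _ = ∑ m ∈ S', lamL m := by
          rw [hS'def]
          exact (Finset.sum_image (fun x _ y _ h => σ.injective h)).symm
      _ = ∑ m ∈ S', ∑ pp, f (e pp) * Complex.normSq (B pp m) :=
          Finset.sum_congr rfl fun m _ => hlam m
      _ ≤ ∑ m ∈ S', ∑ pp, (c ^ (r - 1) * ((star U * R * U) pp pp).re)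
            * Complex.normSq (B pp m) :=
          Finset.sum_le_sum fun m _ => Finset.sum_le_sum fun pp _ =>
            mul_le_mul_of_nonneg_right (hkey pp) (Complex.normSq_nonneg _)
      _ = c ^ (r - 1) * ∑ pp, ((star U * R * U) pp pp).re * t pp := by
          rw [Finset.sum_comm, Finset.mul_sum]
          refine Finset.sum_congr rfl fun pp _ => ?_
          rw [htdef, Finset.mul_sum, Finset.mul_sum]
          refine Finset.sum_congr rfl fun m _ => ?_
          ring
      _ = c ^ (r - 1) * ∑ q, lamR q * sw q := by
          congr 1
          calc ∑ pp, ((star U * R * U) pp pp).re * t pp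
              = ∑ pp, ∑ q, (lamR q * Complex.normSq (Cmat q pp)) * t pp := by
                refine Finset.sum_congr rfl fun pp _ => ?_
                rw [hGnu pp, Finset.sum_mul]
            _ = ∑ q, ∑ pp, (lamR q * Complex.normSq (Cmat q pp)) * t pp :=
                Finset.sum_comm
            _ = ∑ q, lamR q * sw q := by
                refine Finset.sum_congr rfl fun q _ => ?_
                rw [hswdef, Finset.mul_sum]
                refine Finset.sum_congr rfl fun pp _ => ?_
                ring
      _ ≤ c ^ (r - 1) * ∑ j ∈ K, ν j :=
          mul_le_mul_of_nonneg_left habel (Real.rpow_nonneg (le_of_lt hc) _)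
  exact hchain
end
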